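/- arXiv:2103.00083 — 13 statements merged into one kernel-verified Lean document; each statement's English description precedes it below -/
import Mathlib

section
/- Let 0 ≤ τ₁ < τ₂ ≤ 1 and let q₁, q₂, y ∈ ℝ with q₁ > q₂. Then swapping the two quantile values strictly decreases the total pinball loss: ψ_{τ₁}(y − q₂) + ψ_{τ₂}(y − q₁) < ψ_{τ₁}(y − q₁) + ψ_{τ₂}(y − q₂). -/
/-- The pinball (tilted-ℓ₁) loss at quantile level `τ`. -/
noncomputable def pinball (τ z : ℝ) : ℝ := if 0 ≤ z then τ * z else (1 - τ) * (-z)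

/-- Swapping two crossed quantile values strictly decreases the total pinball loss. -/
theorem pinball_swap_strict (τ₁ τ₂ q₁ q₂ y : ℝ)
    (hτ₁ : 0 ≤ τ₁) (hτ : τ₁ < τ₂) (hτ₂ : τ₂ ≤ 1) (hq : q₂ < q₁) :
    pinball τ₁ (y - q₂) + pinball τ₂ (y - q₁) <
      pinball τ₁ (y - q₁) + pinball τ₂ (y - q₂) := by
  simp only [pinball]
  split_ifs <;> nlinarith
end

section
/- Let m ≥ 1, let 0 ≤ τ₁ ≤ τ₂ ≤ ⋯ ≤ τ_m ≤ 1 be quantile levels, let v ∈ ℝ^m, and let y ∈ ℝ. Then sorting can only improve the total pinball loss: ∑_{i=1}^m ψ_{τ_i}(y − sort(v)_i) ≤ ∑_{i=1}^m ψ_{τ_i}(y − v_i). -/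
lemma pinball_eq (τ z : ℝ) : pinball τ z = τ * z + max (-z) 0 := by
  unfold pinball
  split_ifs with h
  · rw [max_eq_right (by linarith)]; ring
  · rw [max_eq_left (by linarith)]; ring

/-- Sorting the vector of quantile predictions can only improve the total pinball loss. -/
theorem pinball_sort_le (m : ℕ) (hm : 1 ≤ m) (τ : Fin m → ℝ) (hτmono : Monotone τ)
    (hτ0 : ∀ i, 0 ≤ τ i) (hτ1 : ∀ i, τ i ≤ 1) (v : Fin m → ℝ) (y : ℝ) :
    ∑ i, pinball (τ i) (y - (v ∘ Tuple.sort v) i) ≤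
      ∑ i, pinball (τ i) (y - v i) := by
  simp only [pinball_eq, Finset.sum_add_distrib]
  have h1 : ∑ i, max (-(y - (v ∘ Tuple.sort v) i)) 0 = ∑ i, max (-(y - v i)) 0 := by
    exact Equiv.sum_comp (Tuple.sort v) (fun i => max (-(y - v i)) 0)
  rw [h1]
  gcongr ?_ + _
  have key : ∑ i, τ i * v i ≤ ∑ i, τ i * v (Tuple.sort v i) := by
    have hmono : Monovary τ (v ∘ Tuple.sort v) :=
      hτmono.monovary (Tuple.monotone_sort v)
    have := hmono.sum_smul_comp_perm_le_sum_smul (σ := (Tuple.sort v)⁻¹)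
    simpa [Function.comp] using this
  have : ∑ i, τ i * (y - v (Tuple.sort v i)) ≤ ∑ i, τ i * (y - v i) := by
    simp only [mul_sub, Finset.sum_sub_distrib]
    linarith
  simpa [Function.comp] using this
end

section
/- Let m ≥ 1, let 0 ≤ τ₁ < τ₂ < ⋯ < τ_m ≤ 1 be strictly increasing quantile levels, let v ∈ ℝ^m with sort(v) ≠ v, and let y ∈ ℝ. Then sorting strictly improves the total pinball loss: ∑_{i=1}^m ψ_{τ_i}(y − sort(v)_i) < ∑_{i=1}^m ψ_{τ_i}(y − v_i). -/
lemma pinball_decomp (τ y a : ℝ) :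
    pinball τ (y - a) = τ * (y - a) + max (a - y) 0 := by
  unfold pinball
  rcases le_or_gt 0 (y - a) with h | h
  · rw [if_pos h, max_eq_right (by linarith)]; ring
  · rw [if_neg (not_le.mpr h), max_eq_left (by linarith)]; ring

/-- If the quantile levels are strictly increasing and the vector is not already sorted,
sorting strictly improves the total pinball loss. -/
theorem pinball_sort_lt (m : ℕ) (hm : 1 ≤ m) (τ : Fin m → ℝ) (hτmono : StrictMono τ)
    (hτ0 : ∀ i, 0 ≤ τ i) (hτ1 : ∀ i, τ i ≤ 1) (v : Fin m → ℝ)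
    (hv : v ∘ Tuple.sort v ≠ v) (y : ℝ) :
    ∑ i, pinball (τ i) (y - (v ∘ Tuple.sort v) i) <
      ∑ i, pinball (τ i) (y - v i) := by
  set σ := Tuple.sort v with hσ
  set w := v ∘ σ with hw
  -- the max-part is permutation invariant
  have hmax : ∑ i, max (w i - y) 0 = ∑ i, max (v i - y) 0 := by
    simpa [hw] using Equiv.sum_comp σ (fun i => max (v i - y) 0)
  -- strict rearrangement inequality: ∑ τ i * v i < ∑ τ i * w i
  have hmono : Monovary τ w :=
    (hτmono.monotone.monovary (Tuple.monotone_sort v))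
  have hvw : w ∘ ⇑σ⁻¹ = v := by
    funext i
    simp [hw, Function.comp, Equiv.Perm.inv_def, Equiv.apply_symm_apply]
  have hnot : ¬ Monovary τ v := by
    intro hM
    obtain ⟨i, j, hij, hji⟩ := Tuple.antitone_pair_of_not_sorted (f := v) (Ne.symm hv)
    exact absurd (hM hji) (not_le.mpr (hτmono hij))
  have hlt : ∑ i, τ i * v i < ∑ i, τ i * w i := by
    have := (hmono.sum_mul_comp_perm_lt_sum_mul_iff (σ := σ⁻¹)).mpr (by rwa [hvw])
    calc ∑ i, τ i * v i = ∑ i, τ i * w (σ⁻¹ i) := by rw [← hvw]; rfl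
    _ < ∑ i, τ i * w i := this
  -- combine
  calc ∑ i, pinball (τ i) (y - w i)
      = ∑ i, (τ i * (y - w i) + max (w i - y) 0) := by
        simp_rw [pinball_decomp]
    _ = (∑ i, τ i * y - ∑ i, τ i * w i) + ∑ i, max (w i - y) 0 := by
        rw [Finset.sum_add_distrib, ← Finset.sum_sub_distrib]
        congr 1; apply Finset.sum_congr rfl; intros; ring
    _ < (∑ i, τ i * y - ∑ i, τ i * v i) + ∑ i, max (v i - y) 0 := by
        rw [hmax]; linarith
    _ = ∑ i, pinball (τ i) (y - v i) := by
        simp_rw [pinball_decomp]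
        rw [Finset.sum_add_distrib, ← Finset.sum_sub_distrib]
        congr 1; apply Finset.sum_congr rfl; intros; ring
end

section
/- Let m ≥ 1, let 0 ≤ τ₁ ≤ τ₂ ≤ ⋯ ≤ τ_m ≤ 1 be quantile levels, let v ∈ ℝ^m, and let u ∈ K_m be the isotonic projection of v, i.e., u minimizes the Euclidean norm ‖v − u‖₂ over all u ∈ K_m. Then for every y ∈ ℝ, ∑_{i=1}^m ψ_{τ_i}(y − u_i) ≤ ∑_{i=1}^m ψ_{τ_i}(y − v_i). -/
/-- One-coordinate subgradient inequality for the pinball loss. -/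
lemma pinball_subgrad (τ y uu vv : ℝ) (h0 : 0 ≤ τ) (h1 : τ ≤ 1) :
    pinball τ (y - uu) + ((if y < uu then (1:ℝ) else 0) - τ) * (vv - uu)
      ≤ pinball τ (y - vv) := by
  unfold pinball
  split_ifs <;> nlinarith

/-- Variational inequality for the Euclidean projection onto a convex set of
monotone vectors. -/
lemma proj_inner (m : ℕ) (v u : Fin m → ℝ) (hu : Monotone u)
    (hsq : ∀ w : Fin m → ℝ, Monotone w →
      ∑ i, (v i - u i) ^ 2 ≤ ∑ i, (v i - w i) ^ 2)
    (w : Fin m → ℝ) (hw : Monotone w) :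
    ∑ i, (v i - u i) * (w i - u i) ≤ 0 := by
  set D : ℝ := ∑ i, (v i - u i) * (w i - u i) with hD
  set E : ℝ := ∑ i, (w i - u i) ^ 2 with hE
  have hEnn : 0 ≤ E := Finset.sum_nonneg fun i _ => sq_nonneg _
  have main : ∀ t : ℝ, 0 < t → t ≤ 1 → 2 * D ≤ t * E := by
    intro t ht0 ht1
    have hwt : Monotone (fun i => (1 - t) * u i + t * w i) := by
      intro i j hij
      have h1 := mul_le_mul_of_nonneg_left (hu hij) (by linarith : (0:ℝ) ≤ 1 - t)
      have h2 := mul_le_mul_of_nonneg_left (hw hij) (le_of_lt ht0)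
      dsimp only
      linarith
    have h := hsq _ hwt
    have expand : ∀ i : Fin m,
        (v i - ((1 - t) * u i + t * w i)) ^ 2
          = (v i - u i) ^ 2 - 2 * t * ((v i - u i) * (w i - u i))
            + t ^ 2 * (w i - u i) ^ 2 := by
      intro i; ring
    rw [Finset.sum_congr rfl fun i _ => expand i] at h
    rw [Finset.sum_add_distrib, Finset.sum_sub_distrib, ← Finset.mul_sum,
      ← Finset.mul_sum] at h
    nlinarith [sq_nonneg t]
  by_contra hcon
  push_neg at hcon
  set t : ℝ := min 1 (D / (E + 1)) with htdef
  have ht0 : 0 < t := lt_min one_pos (div_pos hcon (by linarith))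
  have ht1 : t ≤ 1 := min_le_left _ _
  have h2 := main t ht0 ht1
  have h3 : t ≤ D / (E + 1) := min_le_right _ _
  have h4 : t * (E + 1) ≤ D := by
    rw [← le_div_iff₀ (by linarith : (0:ℝ) < E + 1)]; exact h3
  nlinarith

/-- Abel summation argument. -/
lemma abel_nonneg (m : ℕ) (a e : ℕ → ℝ)
    (hS0 : ∑ i ∈ Finset.range m, e i = 0)
    (hstep : ∀ i, i + 1 < m → 0 ≤ (a i - a (i + 1)) * ∑ j ∈ Finset.range (i + 1), e j) :
    0 ≤ ∑ i ∈ Finset.range m, a i * e i := by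
  have h := Finset.sum_range_by_parts a e m
  simp only [smul_eq_mul] at h
  rw [h, hS0, mul_zero, zero_sub]
  rw [← Finset.sum_neg_distrib]
  apply Finset.sum_nonneg
  intro i hi
  rw [Finset.mem_range] at hi
  have : i + 1 < m := by omega
  have := hstep i this
  nlinarith [this]

/-- Isotonic projection (the Euclidean-norm projection onto the cone of nondecreasing
vectors) can only improve the total pinball loss. -/
theorem pinball_isotonicProj_le (m : ℕ) (hm : 1 ≤ m) (τ : Fin m → ℝ) (hτmono : Monotone τ)
    (hτ0 : ∀ i, 0 ≤ τ i) (hτ1 : ∀ i, τ i ≤ 1) (v u : Fin m → ℝ)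
    (hu : Monotone u)
    (hproj : ∀ w : Fin m → ℝ, Monotone w →
      Real.sqrt (∑ i, (v i - u i) ^ 2) ≤ Real.sqrt (∑ i, (v i - w i) ^ 2))
    (y : ℝ) :
    ∑ i, pinball (τ i) (y - u i) ≤ ∑ i, pinball (τ i) (y - v i) := by
  -- squared version of the projection hypothesis
  have hsq : ∀ w : Fin m → ℝ, Monotone w →
      ∑ i, (v i - u i) ^ 2 ≤ ∑ i, (v i - w i) ^ 2 := by
    intro w hw
    have h := hproj w hw
    have h1 : (0:ℝ) ≤ ∑ i, (v i - u i) ^ 2 := Finset.sum_nonneg fun i _ => sq_nonneg _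
    have h2 : (0:ℝ) ≤ ∑ i, (v i - w i) ^ 2 := Finset.sum_nonneg fun i _ => sq_nonneg _
    calc ∑ i, (v i - u i) ^ 2 = Real.sqrt (∑ i, (v i - u i) ^ 2) ^ 2 :=
          (Real.sq_sqrt h1).symm
      _ ≤ Real.sqrt (∑ i, (v i - w i) ^ 2) ^ 2 := by
          apply pow_le_pow_left₀ (Real.sqrt_nonneg _) h
      _ = ∑ i, (v i - w i) ^ 2 := Real.sq_sqrt h2
  have key : ∀ w : Fin m → ℝ, Monotone w → ∑ i, (v i - u i) * (w i - u i) ≤ 0 :=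
    proj_inner m v u hu hsq
  -- the subgradient vector
  set a : Fin m → ℝ := fun i => (if y < u i then (1:ℝ) else 0) - τ i with ha
  -- Step 1: per-coordinate subgradient inequality
  have hcoord : ∀ i : Fin m,
      pinball (τ i) (y - u i) + a i * (v i - u i) ≤ pinball (τ i) (y - v i) :=
    fun i => pinball_subgrad (τ i) y (u i) (v i) (hτ0 i) (hτ1 i)
  -- Step 2: total sum of v - u is zero
  have htot : ∑ i, (v i - u i) = 0 := by
    have h1 := key (fun i => u i + 1) (by intro i j hij; dsimp; linarith [hu hij])
    have h2 := key (fun i => u i + (-1)) (by intro i j hij; dsimp; linarith [hu hij])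
    simp only [add_sub_cancel_left] at h1 h2
    have e1 : ∑ i, (v i - u i) * (1:ℝ) = ∑ i, (v i - u i) := by
      apply Finset.sum_congr rfl; intros; ring
    have e2 : ∑ i, (v i - u i) * (-1:ℝ) = -∑ i, (v i - u i) := by
      rw [← Finset.sum_neg_distrib]; apply Finset.sum_congr rfl; intros; ring
    rw [e1] at h1; rw [e2] at h2; linarith
  -- Step 3: prefix sums are nonnegative
  have hpre : ∀ r : ℕ, 0 ≤ ∑ i ∈ Finset.univ.filter (fun i : Fin m => i.val < r), (v i - u i) := by
    intro r
    have hmon : Monotone (fun i : Fin m => u i - (if i.val < r then (1:ℝ) else 0)) := by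
      intro i j hij
      have hvij : (i : ℕ) ≤ (j : ℕ) := Fin.le_def.mp hij
      have := hu hij
      dsimp only
      split_ifs <;> first | linarith | (exfalso; omega)
    have h := key _ hmon
    have e : ∑ i, (v i - u i) * ((u i - (if i.val < r then (1:ℝ) else 0)) - u i)
        = -∑ i ∈ Finset.univ.filter (fun i : Fin m => i.val < r), (v i - u i) := by
      rw [← Finset.sum_neg_distrib, Finset.sum_filter]
      apply Finset.sum_congr rfl
      intro i _
      split_ifs <;> ring
    rw [e] at h
    linarith
  -- Step 4: complementary slackness at strict increases
  have hslack : ∀ i j : Fin m, i.val + 1 = j.val → u i < u j →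
      ∑ k ∈ Finset.univ.filter (fun k : Fin m => k.val < j.val), (v k - u k) ≤ 0 := by
    intro i j hij huij
    set t : ℝ := u j - u i with htdef
    have ht : 0 < t := by simp [htdef]; linarith
    have hmon : Monotone (fun k : Fin m => u k + (if k.val < j.val then t else 0)) := by
      intro k l hkl
      dsimp only
      by_cases hk : k.val < j.val
      · by_cases hl : l.val < j.val
        · simp [hk, hl]; linarith [hu hkl]
        · simp [hk, hl]
          have h1 : k ≤ i := by
            apply Fin.le_def.mpr; omega
          have h2 : j ≤ l := by
            apply Fin.le_def.mpr; omega
          have := hu h1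
          have := hu h2
          simp [htdef]
          linarith
      · have hl : ¬ l.val < j.val := by omega
        simp [hk, hl]; exact hu hkl
    have h := key _ hmon
    have e : ∑ k, (v k - u k) * ((u k + (if k.val < j.val then t else 0)) - u k)
        = t * ∑ k ∈ Finset.univ.filter (fun k : Fin m => k.val < j.val), (v k - u k) := by
      rw [Finset.mul_sum, Finset.sum_filter]
      apply Finset.sum_congr rfl
      intro k _
      split_ifs <;> ring
    rw [e] at h
    nlinarith
  -- Translate to ℕ-indexed sums
  set eN : ℕ → ℝ := fun n => if h : n < m then v ⟨n, h⟩ - u ⟨n, h⟩ else 0 with heN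
  set aN : ℕ → ℝ := fun n => if h : n < m then a ⟨n, h⟩ else 0 with haN
  have hrange : ∀ r : ℕ, r ≤ m → ∑ i ∈ Finset.range r, eN i
      = ∑ i ∈ Finset.univ.filter (fun i : Fin m => i.val < r), (v i - u i) := by
    intro r hr
    have hsub : Finset.range r ⊆ Finset.range m := Finset.range_subset_range.mpr hr
    have h1 : ∑ i ∈ Finset.range r, eN i
        = ∑ i ∈ Finset.range m, (if i < r then eN i else 0) := by
      rw [← Finset.sum_subset hsub (by
        intro x _ hx
        rw [Finset.mem_range] at hx
        simp [hx])]
      apply Finset.sum_congr rfl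
      intro x hx
      rw [Finset.mem_range] at hx
      simp [hx]
    rw [h1, ← Fin.sum_univ_eq_sum_range (fun n => if n < r then eN n else 0) m,
      Finset.sum_filter]
    apply Finset.sum_congr rfl
    intro i _
    by_cases hir : (i : ℕ) < r
    · simp [hir, heN, i.isLt]
    · simp [hir]
  have habel : 0 ≤ ∑ i ∈ Finset.range m, aN i * eN i := by
    apply abel_nonneg
    · rw [hrange m le_rfl, Finset.filter_true_of_mem (fun i _ => i.isLt)]
      exact htot
    · intro i hi1
      have hi : i < m := by omega
      have hle : u ⟨i, hi⟩ ≤ u ⟨i + 1, hi1⟩ := hu (by simp [Fin.le_def])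
      rcases eq_or_lt_of_le hle with heq | hlt
      · have haa : aN i - aN (i + 1) = τ ⟨i + 1, hi1⟩ - τ ⟨i, hi⟩ := by
          simp only [haN, ha, dif_pos hi, dif_pos hi1, heq]
          ring
        rw [haa, hrange (i + 1) (by omega)]
        apply mul_nonneg
        · exact sub_nonneg.mpr (hτmono (by simp [Fin.le_def]))
        · exact hpre (i + 1)
      · have hz : ∑ j ∈ Finset.range (i + 1), eN j = 0 := by
          rw [hrange (i + 1) (by omega)]
          exact le_antisymm (hslack ⟨i, hi⟩ ⟨i + 1, hi1⟩ rfl hlt) (hpre (i + 1))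
        rw [hz, mul_zero]
  have hsum_ae : ∑ i ∈ Finset.range m, aN i * eN i = ∑ i : Fin m, a i * (v i - u i) := by
    rw [← Fin.sum_univ_eq_sum_range (fun n => aN n * eN n) m]
    apply Finset.sum_congr rfl
    intro i _
    simp [haN, heN, i.isLt]
  rw [hsum_ae] at habel
  calc ∑ i, pinball (τ i) (y - u i)
      ≤ ∑ i, (pinball (τ i) (y - u i) + a i * (v i - u i)) := by
        rw [Finset.sum_add_distrib]
        linarith
    _ ≤ ∑ i, pinball (τ i) (y - v i) := Finset.sum_le_sum fun i _ => hcoord i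
end

section
/- Let k, ℓ ≥ 1, let 0 ≤ τ₁ ≤ τ₂ ≤ ⋯ ≤ τ_{k+ℓ} ≤ 1 be quantile levels, let a > b be real numbers, and let c = (k·a + ℓ·b)/(k + ℓ) be their weighted mean. Then for every y ∈ ℝ, pooling the violating blocks can only improve the total pinball loss: ∑_{i=1}^{k+ℓ} ψ_{τ_i}(y − c) ≤ ∑_{i=1}^{k} ψ_{τ_i}(y − a) + ∑_{i=k+1}^{k+ℓ} ψ_{τ_i}(y − b). -/
lemma sum_pinball_eq {n : ℕ} (τ : Fin n → ℝ) (z : ℝ) :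
    ∑ i : Fin n, pinball (τ i) z = (∑ i : Fin n, τ i) * z + n * max (-z) 0 := by
  simp only [pinball_eq, Finset.sum_add_distrib, Finset.sum_const, Finset.card_univ,
    Fintype.card_fin, nsmul_eq_mul, Finset.sum_mul]

/-- The pool-adjacent-violators step: replacing a monotonicity-violating pair of constant
blocks (`k` entries equal to `a` followed by `ℓ` entries equal to `b`, with `a > b`) by
their common weighted mean can only improve the total pinball loss. -/
theorem pinball_pava_step_le (k l : ℕ) (hk : 1 ≤ k) (hl : 1 ≤ l)
    (τ : Fin (k + l) → ℝ) (hτmono : Monotone τ)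
    (hτ0 : ∀ i, 0 ≤ τ i) (hτ1 : ∀ i, τ i ≤ 1)
    (a b c : ℝ) (hab : b < a) (hc : c = (k * a + l * b) / (k + l)) (y : ℝ) :
    ∑ i : Fin (k + l), pinball (τ i) (y - c) ≤
      (∑ i : Fin k, pinball (τ (Fin.castAdd l i)) (y - a)) +
        ∑ i : Fin l, pinball (τ (Fin.natAdd k i)) (y - b) := by
  have hklpos : (0:ℝ) < (k:ℝ) + l := by positivity
  have hcc : c * ((k:ℝ) + l) = k * a + l * b := by
    rw [hc]; field_simp
  set S₁ := ∑ i : Fin k, τ (Fin.castAdd l i) with hS₁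
  set S₂ := ∑ i : Fin l, τ (Fin.natAdd k i) with hS₂
  have hsum : ∑ i : Fin (k + l), τ i = S₁ + S₂ := Fin.sum_univ_add _
  rw [sum_pinball_eq, sum_pinball_eq, sum_pinball_eq, hsum]
  simp only [neg_sub]
  -- key index
  set j₀ : Fin (k + l) := Fin.castAdd l ⟨k - 1, by omega⟩ with hj₀
  set t := τ j₀ with ht
  have hS₁le : S₁ ≤ (k:ℝ) * t := by
    have h := Finset.sum_le_card_nsmul Finset.univ (fun i : Fin k => τ (Fin.castAdd l i)) t
      (fun i _ => hτmono (by simp [hj₀, Fin.le_def]; omega))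
    simpa [nsmul_eq_mul] using h
  have hS₂ge : (l:ℝ) * t ≤ S₂ := by
    have h := Finset.card_nsmul_le_sum Finset.univ (fun i : Fin l => τ (Fin.natAdd k i)) t
      (fun i _ => hτmono (by simp [hj₀, Fin.le_def]; omega))
    simpa [nsmul_eq_mul] using h
  have h1 : (l:ℝ) * S₁ ≤ (k:ℝ) * S₂ := by
    have hk0 : (0:ℝ) ≤ k := Nat.cast_nonneg k
    have hl0 : (0:ℝ) ≤ l := Nat.cast_nonneg l
    nlinarith
  have h2 : ((k:ℝ) + l) * max (c - y) 0 ≤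
      (k:ℝ) * max (a - y) 0 + (l:ℝ) * max (b - y) 0 := by
    have ha : a - y ≤ max (a - y) 0 := le_max_left _ _
    have hb : b - y ≤ max (b - y) 0 := le_max_left _ _
    have ha0 : (0:ℝ) ≤ max (a - y) 0 := le_max_right _ _
    have hb0 : (0:ℝ) ≤ max (b - y) 0 := le_max_right _ _
    rcases le_or_gt (c - y) 0 with h | h
    · rw [max_eq_right h]
      have hk0 : (0:ℝ) ≤ k := Nat.cast_nonneg k
      have hl0 : (0:ℝ) ≤ l := Nat.cast_nonneg l
      nlinarith
    · rw [max_eq_left h.le]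
      have hk0 : (0:ℝ) ≤ k := Nat.cast_nonneg k
      have hl0 : (0:ℝ) ≤ l := Nat.cast_nonneg l
      nlinarith
  -- linear part
  have h3 : S₁ * a + S₂ * b ≤ (S₁ + S₂) * c := by
    rw [← mul_le_mul_iff_of_pos_right hklpos]
    have hc2 : (S₁ + S₂) * c * ((k:ℝ) + l) = (S₁ + S₂) * ((k:ℝ) * a + l * b) := by
      rw [mul_assoc, hcc]
    nlinarith [mul_le_mul_of_nonneg_left h1 (le_of_lt (sub_pos.mpr hab)), hc2]
  have hcast : ((k + l : ℕ) : ℝ) = (k:ℝ) + l := by push_cast; ring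
  rw [hcast]
  nlinarith [h2, h3]
end

section
/- Let m ≥ 1, let v ∈ ℝ^m with sort(v) ≠ v, let g ∈ ℝ^m be strictly increasing (g_1 < g_2 < ⋯ < g_m), and let p > 1. Then the ℓ_p error strictly improves under sorting: ∑_{i=1}^m |sort(v)_i − g_i|^p < ∑_{i=1}^m |v_i − g_i|^p. -/
private lemma strictConvexOn_abs_rpow {p : ℝ} (hp : 1 < p) :
    StrictConvexOn ℝ Set.univ (fun z : ℝ => |z| ^ p) := by
  refine ⟨convex_univ, fun x _ y _ hxy a b ha hb hab => ?_⟩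
  simp only [smul_eq_mul]
  have hp0 : 0 < p := lt_trans one_pos hp
  have h1 : |a * x + b * y| ≤ a * |x| + b * |y| := by
    calc |a * x + b * y| ≤ |a * x| + |b * y| := abs_add_le _ _
      _ = a * |x| + b * |y| := by rw [abs_mul, abs_mul, abs_of_pos ha, abs_of_pos hb]
  by_cases hxy' : |x| = |y|
  · have hx' : x = -y := by
      rcases abs_eq_abs.mp hxy' with h | h
      · exact absurd h hxy
      · exact h
    have hy0 : y ≠ 0 := by
      rintro rfl; simp [hx'] at hxy
    have hylt : |a * x + b * y| < |y| := by
      rw [hx']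
      have : a * -y + b * y = (b - a) * y := by ring
      rw [this, abs_mul]
      have hba : |b - a| < 1 := by
        rw [abs_lt]; constructor <;> nlinarith
      have : |y| > 0 := abs_pos.mpr hy0
      nlinarith
    have := Real.rpow_lt_rpow (abs_nonneg _) hylt hp0
    calc |a * x + b * y| ^ p < |y| ^ p := this
      _ = a * |x| ^ p + b * |y| ^ p := by rw [hxy']; ring_nf; nlinarith [Real.rpow_nonneg (abs_nonneg y) p]
  · have h2 := (strictConvexOn_rpow hp).2 (Set.mem_Ici.mpr (abs_nonneg x))
      (Set.mem_Ici.mpr (abs_nonneg y)) hxy' ha hb hab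
    simp only [smul_eq_mul] at h2
    calc |a * x + b * y| ^ p ≤ (a * |x| + b * |y|) ^ p :=
          Real.rpow_le_rpow (abs_nonneg _) h1 hp0.le
      _ < a * |x| ^ p + b * |y| ^ p := h2

private lemma key4 {p : ℝ} (hp : 1 < p) {a b c d : ℝ} (hab : a < b) (hbd : b < d)
    (hac : a < c) (hcd : c < d) (hsum : b + c = a + d) :
    |b| ^ p + |c| ^ p < |a| ^ p + |d| ^ p := by
  have hD : (0:ℝ) < d - a := by linarith
  have had : a ≠ d := by intro h; rw [h] at hD; linarith
  have hconv := strictConvexOn_abs_rpow hp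
  have h1 : |b| ^ p < (d - b) / (d - a) * |a| ^ p + (b - a) / (d - a) * |d| ^ p := by
    have := hconv.2 (Set.mem_univ a) (Set.mem_univ d) had
      (show (0:ℝ) < (d - b) / (d - a) from div_pos (by linarith) hD)
      (show (0:ℝ) < (b - a) / (d - a) from div_pos (by linarith) hD)
      (by field_simp; ring)
    simp only [smul_eq_mul] at this
    have heq : (d - b) / (d - a) * a + (b - a) / (d - a) * d = b := by field_simp; ring
    rwa [heq] at this
  have h2 : |c| ^ p < (d - c) / (d - a) * |a| ^ p + (c - a) / (d - a) * |d| ^ p := by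
    have := hconv.2 (Set.mem_univ a) (Set.mem_univ d) had
      (show (0:ℝ) < (d - c) / (d - a) from div_pos (by linarith) hD)
      (show (0:ℝ) < (c - a) / (d - a) from div_pos (by linarith) hD)
      (by field_simp; ring)
    simp only [smul_eq_mul] at this
    have heq : (d - c) / (d - a) * a + (c - a) / (d - a) * d = c := by field_simp; ring
    rwa [heq] at this
  have hl : (d - b) / (d - a) + (d - c) / (d - a) = 1 := by
    rw [← add_div, div_eq_one_iff_eq hD.ne']; linarith
  have hm : (b - a) / (d - a) + (c - a) / (d - a) = 1 := by
    rw [← add_div, div_eq_one_iff_eq hD.ne']; linarith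
  have h3 := add_lt_add h1 h2
  have h4 : (d - b) / (d - a) * |a| ^ p + (b - a) / (d - a) * |d| ^ p
      + ((d - c) / (d - a) * |a| ^ p + (c - a) / (d - a) * |d| ^ p)
      = |a| ^ p + |d| ^ p := by linear_combination |a| ^ p * hl + |d| ^ p * hm
  linarith

private lemma key_ineq {p : ℝ} (hp : 1 < p) {x y s t : ℝ} (hxy : x < y) (hst : s < t) :
    |x - s| ^ p + |y - t| ^ p < |x - t| ^ p + |y - s| ^ p :=
  key4 hp (a := x - t) (b := x - s) (c := y - t) (d := y - s)
    (by linarith) (by linarith) (by linarith) (by linarith) (by ring)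

/-- If `v` is not already sorted, `g` is strictly increasing, and `p > 1`,
then sorting strictly improves the ℓ_p error. -/
theorem lp_sort_lt (m : ℕ) (hm : 1 ≤ m) (v g : Fin m → ℝ)
    (hv : v ∘ Tuple.sort v ≠ v) (hg : StrictMono g) (p : ℝ) (hp : 1 < p) :
    ∑ i, |(v ∘ Tuple.sort v) i - g i| ^ p < ∑ i, |v i - g i| ^ p := by
  classical
  set F : Equiv.Perm (Fin m) → ℝ := fun σ => ∑ i, |v (σ i) - g i| ^ p with hF
  -- swap lemma
  have swap_lt : ∀ (σ : Equiv.Perm (Fin m)) (i j : Fin m), i < j → v (σ j) < v (σ i) →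
      F (σ * Equiv.swap i j) < F σ := by
    intro σ i j hij hvij
    have hne : i ≠ j := ne_of_lt hij
    have hgij : g i < g j := hg hij
    have hkey := key_ineq hp hvij hgij
    simp only [hF]
    rw [← Finset.sum_compl_add_sum {i, j}, ← Finset.sum_compl_add_sum {i, j}
      (f := fun k => |v (σ k) - g k| ^ p)]
    have hcongr : ∑ k ∈ ({i, j} : Finset (Fin m))ᶜ, |v ((σ * Equiv.swap i j) k) - g k| ^ p
        = ∑ k ∈ ({i, j} : Finset (Fin m))ᶜ, |v (σ k) - g k| ^ p := by
      apply Finset.sum_congr rfl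
      intro k hk
      simp only [Finset.mem_compl, Finset.mem_insert, Finset.mem_singleton, not_or] at hk
      rw [Equiv.Perm.mul_apply, Equiv.swap_apply_of_ne_of_ne hk.1 hk.2]
    rw [hcongr]
    have h2 : ∑ k ∈ ({i, j} : Finset (Fin m)), |v ((σ * Equiv.swap i j) k) - g k| ^ p
        < ∑ k ∈ ({i, j} : Finset (Fin m)), |v (σ k) - g k| ^ p := by
      rw [Finset.sum_pair hne, Finset.sum_pair hne]
      simp only [Equiv.Perm.mul_apply, Equiv.swap_apply_left, Equiv.swap_apply_right]
      linarith [hkey]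
    linarith
  -- existence of minimizer
  obtain ⟨σ₀, -, hσ₀⟩ := Finset.exists_min_image (Finset.univ : Finset (Equiv.Perm (Fin m))) F
    ⟨1, Finset.mem_univ 1⟩
  have hσ₀' : ∀ σ, F σ₀ ≤ F σ := fun σ => hσ₀ σ (Finset.mem_univ σ)
  -- minimizer is monotone
  have hmono : Monotone (v ∘ σ₀) := by
    by_contra hmon
    rw [Monotone] at hmon
    push_neg at hmon
    obtain ⟨i, j, hij, hlt⟩ := hmon
    have hij' : i < j := lt_of_le_of_ne hij (by rintro rfl; exact lt_irrefl _ hlt)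
    exact absurd (hσ₀' (σ₀ * Equiv.swap i j)) (not_le.mpr (swap_lt σ₀ i j hij' hlt))
  have hsorted : v ∘ σ₀ = v ∘ Tuple.sort v := Tuple.comp_sort_eq_comp_iff_monotone.mpr hmono
  -- v itself is not monotone
  have hvmono : ¬ Monotone v := by
    intro h
    apply hv
    have : v ∘ (Equiv.refl (Fin m)) = v ∘ Tuple.sort v :=
      Tuple.comp_sort_eq_comp_iff_monotone.mpr (by simpa using h)
    simpa using this.symm
  rw [Monotone] at hvmono
  push_neg at hvmono
  obtain ⟨i, j, hij, hlt⟩ := hvmono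
  have hij' : i < j := lt_of_le_of_ne hij (by rintro rfl; exact lt_irrefl _ hlt)
  have hs := swap_lt 1 i j hij' (by simpa using hlt)
  have hL : ∑ i, |(v ∘ Tuple.sort v) i - g i| ^ p = F σ₀ := by
    simp only [hF]
    apply Finset.sum_congr rfl
    intro k _
    rw [← hsorted]
    simp
  have hR : F 1 = ∑ i, |v i - g i| ^ p := by simp [hF]
  calc ∑ i, |(v ∘ Tuple.sort v) i - g i| ^ p = F σ₀ := hL
    _ ≤ F (1 * Equiv.swap i j) := hσ₀' _
    _ < F 1 := hs
    _ = ∑ i, |v i - g i| ^ p := hR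
end

section
/- Let m ≥ 1, let v ∈ ℝ^m, and let u ∈ K_m be the isotonic projection of v, i.e., u minimizes the Euclidean norm ‖v − u‖₂ over all u ∈ K_m. Then for every nondecreasing vector g ∈ K_m and every p ≥ 1, the ℓ_p error can only improve: (∑_{i=1}^m |u_i − g_i|^p)^{1/p} ≤ (∑_{i=1}^m |v_i − g_i|^p)^{1/p}. -/
open Finset

/-- Subgradient inequality for `x ↦ x^p` on `[0,∞)` at a positive point. -/
lemma subgrad_pos {p : ℝ} (hp : 1 ≤ p) {x y : ℝ} (hx : 0 < x) (hy : 0 ≤ y) :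
    x ^ p + p * x ^ (p - 1) * (y - x) ≤ y ^ p := by
  have hs : (-1 : ℝ) ≤ y / x - 1 := by
    have : 0 ≤ y / x := div_nonneg hy hx.le
    linarith
  have hB := one_add_mul_self_le_rpow_one_add hs hp
  rw [add_sub_cancel] at hB
  have hxp : (0:ℝ) < x ^ p := Real.rpow_pos_of_pos hx p
  have hmul := mul_le_mul_of_nonneg_left hB hxp.le
  have hdiv : x ^ p * (y / x) ^ p = y ^ p := by
    rw [Real.div_rpow hy hx.le, mul_div_cancel₀]
    exact (Real.rpow_pos_of_pos hx p).ne'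
  have hx1 : x ^ (p - 1) = x ^ p / x := Real.rpow_sub_one hx.ne' p
  rw [hdiv] at hmul
  calc x ^ p + p * x ^ (p - 1) * (y - x)
      = x ^ p * (1 + p * (y / x - 1)) := by
        rw [hx1]; field_simp
    _ ≤ y ^ p := hmul

/-- Signed subgradient inequality for `x ↦ |x|^p`. -/
lemma subgrad {p : ℝ} (hp : 1 ≤ p) (x y : ℝ) :
    |x| ^ p + p * |x| ^ (p - 1) * Real.sign x * (y - x) ≤ |y| ^ p := by
  have hp0 : (0:ℝ) < p := lt_of_lt_of_le one_pos hp
  rcases lt_trichotomy x 0 with hx | hx | hx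
  · have h := subgrad_pos hp (x := -x) (y := |y|) (by linarith) (abs_nonneg y)
    have hcoef : 0 ≤ p * (-x) ^ (p - 1) :=
      mul_nonneg hp0.le (Real.rpow_nonneg (by linarith) _)
    have hyy : -y ≤ |y| := neg_le_abs y
    have h2 : p * (-x) ^ (p-1) * (-y - -x) ≤ p * (-x) ^ (p-1) * (|y| - -x) := by
      apply mul_le_mul_of_nonneg_left _ hcoef
      linarith
    rw [abs_of_neg hx, Real.sign_of_neg hx]
    nlinarith [h, h2]
  · subst hx
    simp only [abs_zero, Real.sign_zero, mul_zero, zero_mul, add_zero]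
    have : (0:ℝ) ^ p = 0 := Real.zero_rpow hp0.ne'
    rw [this]
    exact Real.rpow_nonneg (abs_nonneg y) p
  · have h := subgrad_pos hp (x := x) (y := |y|) hx (abs_nonneg y)
    have hcoef : 0 ≤ p * x ^ (p - 1) :=
      mul_nonneg hp0.le (Real.rpow_nonneg hx.le _)
    have hyy : y ≤ |y| := le_abs_self y
    have h2 : p * x ^ (p-1) * (y - x) ≤ p * x ^ (p-1) * (|y| - x) := by
      apply mul_le_mul_of_nonneg_left _ hcoef
      linarith
    rw [abs_of_pos hx, Real.sign_of_pos hx]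
    nlinarith [h, h2]

/-- Monotonicity of the subgradient `x ↦ p|x|^(p-1) sign x`. -/
lemma subgrad_mono {p : ℝ} (hp : 1 ≤ p) {x y : ℝ} (hxy : x ≤ y) :
    p * |x| ^ (p - 1) * Real.sign x ≤ p * |y| ^ (p - 1) * Real.sign y := by
  have hp0 : (0:ℝ) < p := lt_of_lt_of_le one_pos hp
  have key : ∀ z : ℝ, 0 < z → |z| ^ (p-1) * Real.sign z = z ^ (p-1) := by
    intro z hz; rw [abs_of_pos hz, Real.sign_of_pos hz, mul_one]
  rcases lt_trichotomy x 0 with hx | hx | hx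
  · rcases lt_trichotomy y 0 with hy | hy | hy
    · rw [abs_of_neg hx, Real.sign_of_neg hx, abs_of_neg hy, Real.sign_of_neg hy]
      simp only [mul_neg, mul_one, neg_le_neg_iff]
      have : (-y) ^ (p-1) ≤ (-x) ^ (p-1) :=
        Real.rpow_le_rpow (by linarith) (by linarith) (by linarith)
      nlinarith
    · subst hy; rw [Real.sign_of_neg hx, Real.sign_zero]
      nlinarith [Real.rpow_nonneg (abs_nonneg x) (p-1)]
    · rw [Real.sign_of_neg hx, Real.sign_of_pos hy]
      nlinarith [Real.rpow_nonneg (abs_nonneg x) (p-1),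
        Real.rpow_nonneg (abs_nonneg y) (p-1)]
  · subst hx
    rcases eq_or_lt_of_le hxy with h | hy
    · rw [← h]
    · rw [Real.sign_zero, Real.sign_of_pos hy]
      nlinarith [Real.rpow_nonneg (abs_nonneg y) (p-1)]
  · have hy : 0 < y := lt_of_lt_of_le hx hxy
    rw [mul_assoc, mul_assoc, key x hx, key y hy]
    have : x ^ (p-1) ≤ y ^ (p-1) := Real.rpow_le_rpow hx.le hxy (by linarith)
    nlinarith

/-- Isotonic projection (the Euclidean-norm projection onto the cone of nondecreasing
vectors) can only improve the ℓ_p error to any nondecreasing target vector, for `p ≥ 1`. -/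
theorem lp_isotonicProj_le (m : ℕ) (hm : 1 ≤ m) (v u : Fin m → ℝ)
    (hu : Monotone u)
    (hproj : ∀ w : Fin m → ℝ, Monotone w →
      Real.sqrt (∑ i, (v i - u i) ^ 2) ≤ Real.sqrt (∑ i, (v i - w i) ^ 2))
    (g : Fin m → ℝ) (hg : Monotone g) (p : ℝ) (hp : 1 ≤ p) :
    (∑ i, |u i - g i| ^ p) ^ (1 / p) ≤ (∑ i, |v i - g i| ^ p) ^ (1 / p) := by
  classical
  -- extend to ℕ by clamping
  set e : ℕ → Fin m := fun i => ⟨min i (m-1), by omega⟩ with he_def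
  have he : ∀ i : Fin m, e i.val = i := by
    intro i
    have hi := i.isLt
    apply Fin.ext
    simp only [he_def]
    omega
  have hemono : Monotone e := by
    intro a b hab
    simp only [he_def, Fin.mk_le_mk]
    omega
  set vv : ℕ → ℝ := fun i => v (e i) with hvv
  set uu : ℕ → ℝ := fun i => u (e i) with huu_def
  set gg : ℕ → ℝ := fun i => g (e i) with hgg_def
  have huu : Monotone uu := hu.comp hemono
  have hgg : Monotone gg := hg.comp hemono
  set rr : ℕ → ℝ := fun i => vv i - uu i with hrr
  have hval_u : ∀ i : Fin m, uu i.val = u i := fun i => by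
    simp only [huu_def, he i]
  have hval_v : ∀ i : Fin m, vv i.val = v i := fun i => by
    simp only [hvv, he i]
  have hval_g : ∀ i : Fin m, gg i.val = g i := fun i => by
    simp only [hgg_def, he i]
  have hval_r : ∀ i : Fin m, rr i.val = v i - u i := fun i => by
    simp only [hrr, hval_u i, hval_v i]
  -- the variational inequality
  have hVI : ∀ w : ℕ → ℝ, Monotone w →
      (∑ i ∈ range m, rr i * (w i - uu i)) ≤ 0 := by
    intro w hw
    set C := ∑ i ∈ range m, rr i * (w i - uu i) with hC
    set D := ∑ i ∈ range m, (w i - uu i)^2 with hD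
    have hD0 : 0 ≤ D := sum_nonneg fun i _ => sq_nonneg _
    have key : ∀ t : ℝ, 0 ≤ t → t ≤ 1 → 2 * t * C ≤ t^2 * D := by
      intro t ht0 ht1
      set wt : Fin m → ℝ := fun i => u i + t * (w i.val - u i) with hwt
      have hwtm : Monotone wt := by
        intro a b hab
        have h1 : u a ≤ u b := hu hab
        have h2 : w a.val ≤ w b.val := hw hab
        simp only [hwt]
        nlinarith
      have hsq := hproj wt hwtm
      have hs1 : (0:ℝ) ≤ ∑ i, (v i - u i)^2 := sum_nonneg fun i _ => sq_nonneg _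
      have hs2 : (0:ℝ) ≤ ∑ i, (v i - wt i)^2 := sum_nonneg fun i _ => sq_nonneg _
      have hle : ∑ i, (v i - u i)^2 ≤ ∑ i, (v i - wt i)^2 := by
        have h2 := pow_le_pow_left₀ (Real.sqrt_nonneg _) hsq 2
        rwa [Real.sq_sqrt hs1, Real.sq_sqrt hs2] at h2
      have hA : ∑ i, (v i - u i)^2 = ∑ i ∈ range m, (rr i)^2 := by
        rw [← Fin.sum_univ_eq_sum_range (fun i => (rr i)^2) m]
        exact Finset.sum_congr rfl fun i _ => by rw [hval_r i]
      have hB : ∑ i, (v i - wt i)^2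
          = ∑ i ∈ range m, (rr i - t * (w i - uu i))^2 := by
        rw [← Fin.sum_univ_eq_sum_range (fun i => (rr i - t * (w i - uu i))^2) m]
        refine Finset.sum_congr rfl fun i _ => ?_
        rw [hval_r i, hval_u i, hwt]
        ring
      have hexp : ∑ i ∈ range m, (rr i - t * (w i - uu i))^2
          = (∑ i ∈ range m, (rr i)^2) - 2*t*C + t^2*D := by
        rw [hC, hD, Finset.mul_sum, Finset.mul_sum, ← Finset.sum_sub_distrib,
          ← Finset.sum_add_distrib]
        exact Finset.sum_congr rfl fun i _ => by ring
      rw [hA, hB, hexp] at hle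
      linarith
    by_contra hC0
    push_neg at hC0
    set t := min 1 (C/(D+1)) with ht_def
    have ht0 : 0 < t := lt_min one_pos (div_pos hC0 (by linarith))
    have ht1 : t ≤ 1 := min_le_left _ _
    have ht2 : t ≤ C/(D+1) := min_le_right _ _
    have hk := key t ht0.le ht1
    have h3 : t*D ≤ (C/(D+1))*D := mul_le_mul_of_nonneg_right ht2 hD0
    have h4 : (C/(D+1))*D < C := by
      rw [div_mul_eq_mul_div, div_lt_iff₀ (by linarith : (0:ℝ) < D+1)]
      nlinarith
    have h5 := mul_lt_mul_of_pos_left (lt_of_le_of_lt h3 h4) ht0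
    nlinarith
  -- total sum of residuals is zero
  have hS0 : ∑ i ∈ range m, rr i = 0 := by
    have h1 : ∑ i ∈ range m, rr i ≤ 0 := by
      have h := hVI (fun i => uu i + 1) (fun a b hab => by
        simp only; linarith [huu hab])
      calc ∑ i ∈ range m, rr i
          = ∑ i ∈ range m, rr i * ((uu i + 1) - uu i) :=
            Finset.sum_congr rfl fun i _ => by ring
        _ ≤ 0 := h
    have h2 : -(∑ i ∈ range m, rr i) ≤ 0 := by
      have h := hVI (fun i => uu i - 1) (fun a b hab => by
        simp only; linarith [huu hab])
      calc -(∑ i ∈ range m, rr i)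
          = ∑ i ∈ range m, rr i * ((uu i - 1) - uu i) := by
            rw [← Finset.sum_neg_distrib]
            exact Finset.sum_congr rfl fun i _ => by ring
        _ ≤ 0 := h
    linarith
  -- tail sums
  set T : ℕ → ℝ := fun k => ∑ i ∈ Ico k m, rr i with hT_def
  have hfilter : ∀ k : ℕ, (range m).filter (fun i => k ≤ i) = Ico k m := by
    intro k; ext i
    simp only [mem_filter, mem_range, mem_Ico]
    omega
  have hT : ∀ k, T k ≤ 0 := by
    intro k
    have hmono : Monotone (fun i => uu i + (if k ≤ i then (1:ℝ) else 0)) := by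
      intro a b hab
      have h1 := huu hab
      simp only
      by_cases ha : k ≤ a
      · simp [ha, le_trans ha hab]; linarith
      · by_cases hb : k ≤ b
        · simp [ha, hb]; linarith
        · simp [ha, hb]; linarith
    have h := hVI _ hmono
    have heq : ∑ i ∈ range m,
        rr i * ((uu i + (if k ≤ i then (1:ℝ) else 0)) - uu i) = T k := by
      have h1 : ∀ i : ℕ, rr i * ((uu i + (if k ≤ i then (1:ℝ) else 0)) - uu i)
          = (if k ≤ i then rr i else 0) := by
        intro i; by_cases hki : k ≤ i <;> simp [hki]
      simp only [h1]
      rw [← Finset.sum_filter, hfilter k, hT_def]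
    rw [heq] at h
    exact h
  -- complementary slackness
  have hSlack : ∀ k, 1 ≤ k → (uu k - uu (k-1)) * T k = 0 := by
    intro k hk
    set δ := uu k - uu (k-1) with hδ
    have hδ0 : 0 ≤ δ := by
      have := huu (Nat.sub_le k 1)
      linarith
    have hmono : Monotone (fun i => uu i - δ * (if k ≤ i then (1:ℝ) else 0)) := by
      intro a b hab
      simp only
      by_cases ha : k ≤ a
      · simp only [ha, if_pos, le_trans ha hab, if_true]
        linarith [huu hab]
      · by_cases hb : k ≤ b
        · simp only [ha, if_neg, if_pos hb, not_false_iff]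
          have h1 : uu a ≤ uu (k-1) := huu (by omega)
          have h2 : uu k ≤ uu b := huu hb
          simp only [hδ]
          linarith
        · simp only [ha, hb, if_neg, not_false_iff]
          linarith [huu hab]
    have h := hVI _ hmono
    have heq : ∑ i ∈ range m,
        rr i * ((uu i - δ * (if k ≤ i then (1:ℝ) else 0)) - uu i)
        = -δ * T k := by
      have h1 : ∀ i : ℕ, rr i * ((uu i - δ * (if k ≤ i then (1:ℝ) else 0)) - uu i)
          = -δ * (if k ≤ i then rr i else 0) := by
        intro i; by_cases h : k ≤ i <;> simp [h] <;> ring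
      simp only [h1]
      rw [← Finset.mul_sum, ← Finset.sum_filter, hfilter k, hT_def]
    rw [heq] at h
    have h4 : δ * T k ≤ 0 := mul_nonpos_of_nonneg_of_nonpos hδ0 (hT k)
    linarith
  -- the subgradient sequence
  set tt : ℕ → ℝ := fun i => p * |uu i - gg i| ^ (p - 1) * Real.sign (uu i - gg i)
    with htt
  -- Abel summation: the key nonnegativity
  have hG : 0 ≤ ∑ i ∈ range m, tt i * rr i := by
    have hparts := Finset.sum_range_by_parts tt rr m
    simp only [smul_eq_mul] at hparts
    rw [hS0, mul_zero, zero_sub] at hparts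
    rw [hparts]
    rw [neg_nonneg]
    apply Finset.sum_nonpos
    intro i hi
    have him : i + 1 ≤ m := by
      have := Finset.mem_range.mp hi; omega
    have hGT : ∑ j ∈ range (i+1), rr j = -T (i+1) := by
      have := Finset.sum_range_add_sum_Ico rr him
      rw [hS0] at this
      rw [hT_def]
      linarith
    rw [hGT]
    rcases eq_or_lt_of_le (hT (i+1)) with hTz | hTneg
    · rw [hTz]; simp
    · have hsl := hSlack (i+1) (by omega)
      simp only [Nat.add_sub_cancel] at hsl
      have hzero : uu (i+1) - uu i = 0 := by
        rcases mul_eq_zero.mp hsl with h | h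
        · exact h
        · exact absurd h (ne_of_lt hTneg)
      have hle2 : uu (i+1) - gg (i+1) ≤ uu i - gg i := by
        have := hgg (Nat.le_succ i); linarith
      have htle : tt (i+1) ≤ tt i := by
        simp only [htt]; exact subgrad_mono hp hle2
      exact mul_nonpos_of_nonpos_of_nonneg (by linarith) (by linarith)
  -- pointwise convexity and conclusion
  have hpt : ∀ i ∈ range m, |uu i - gg i| ^ p + tt i * rr i ≤ |vv i - gg i| ^ p := by
    intro i _
    have h := subgrad hp (uu i - gg i) (vv i - gg i)
    have h2 : vv i - gg i - (uu i - gg i) = rr i := by simp only [hrr]; ring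
    rw [h2] at h
    simpa [htt] using h
  have hsum : ∑ i ∈ range m, |uu i - gg i| ^ p ≤ ∑ i ∈ range m, |vv i - gg i| ^ p := by
    have h1 := Finset.sum_le_sum hpt
    rw [Finset.sum_add_distrib] at h1
    linarith
  have hL : ∑ i : Fin m, |u i - g i| ^ p = ∑ i ∈ range m, |uu i - gg i| ^ p := by
    rw [← Fin.sum_univ_eq_sum_range (fun i => |uu i - gg i| ^ p) m]
    exact Finset.sum_congr rfl fun i _ => by rw [hval_u i, hval_g i]
  have hR : ∑ i : Fin m, |v i - g i| ^ p = ∑ i ∈ range m, |vv i - gg i| ^ p := by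
    rw [← Fin.sum_univ_eq_sum_range (fun i => |vv i - gg i| ^ p) m]
    exact Finset.sum_congr rfl fun i _ => by rw [hval_v i, hval_g i]
  rw [hL, hR]
  exact Real.rpow_le_rpow
    (Finset.sum_nonneg fun i _ => Real.rpow_nonneg (abs_nonneg _) p) hsum
    (one_div_nonneg.mpr (by linarith))
end

section
/- Let A be a finite set of exclusion probabilities α ∈ (0,1), let T = ∪_{α∈A} {α/2, 1−α/2}, and let q : T → ℝ be a collection of predicted quantiles with ℓ_α := q(α/2) ≤ q(1−α/2) =: u_α for each α ∈ A. Then for every y ∈ ℝ, the weighted interval score equals twice the total pinball loss: ∑_{α∈A} [α·(u_α − ℓ_α) + 2·dist(y, [ℓ_α, u_α])] = 2·∑_{τ∈T} ψ_τ(y − q(τ)), where dist(y, [ℓ, u]) = max{ℓ − y, y − u, 0}. -/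
open scoped Classical

lemma pair_identity (α ℓ u y : ℝ) (hα : 0 < α) (hα1 : α < 1) (hlu : ℓ ≤ u) :
    α * (u - ℓ) + 2 * max (max (ℓ - y) (y - u)) 0 =
      2 * (pinball (α / 2) (y - ℓ) + pinball (1 - α / 2) (y - u)) := by
  unfold pinball
  rcases le_or_gt ℓ y with h1 | h1 <;> rcases le_or_gt y u with h2 | h2
  · rw [if_pos (by linarith),
      max_eq_right (max_le (by linarith) (by linarith) : max (ℓ - y) (y - u) ≤ 0)]
    rcases le_or_gt 0 (y - u) with h3 | h3
    · rw [if_pos h3]; nlinarith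
    · rw [if_neg (not_le.mpr h3)]; ring
  · rw [if_pos (by linarith), if_pos (by linarith),
      max_eq_left (by simp [le_max_iff]; right; linarith : (0:ℝ) ≤ max (ℓ - y) (y - u)),
      max_eq_right (by linarith)]
    ring
  · rw [if_neg (by simp; linarith), if_neg (by simp; linarith),
      max_eq_left (by simp [le_max_iff]; left; linarith : (0:ℝ) ≤ max (ℓ - y) (y - u)),
      max_eq_left (by linarith)]
    ring
  · linarith

/-- The weighted interval score over a finite set `A` of exclusion probabilities equals
twice the total pinball loss over the corresponding quantile levels
`T = ⋃_{α ∈ A} {α/2, 1 - α/2}`. -/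
theorem wis_eq_pinball (A : Finset ℝ) (hA : ∀ α ∈ A, 0 < α ∧ α < 1)
    (q : ℝ → ℝ) (hq : ∀ α ∈ A, q (α / 2) ≤ q (1 - α / 2)) (y : ℝ) :
    ∑ α ∈ A, (α * (q (1 - α / 2) - q (α / 2)) +
        2 * max (max (q (α / 2) - y) (y - q (1 - α / 2))) 0) =
      2 * ∑ τ ∈ A.biUnion (fun α => {α / 2, 1 - α / 2}), pinball τ (y - q τ) := by
  rw [Finset.sum_biUnion, Finset.mul_sum]
  · refine Finset.sum_congr rfl fun α hα => ?_
    obtain ⟨h0, h1⟩ := hA α hα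
    rw [Finset.sum_pair (by intro h; nlinarith [h] : (α / 2 : ℝ) ≠ 1 - α / 2)]
    exact pair_identity α _ _ y h0 h1 (hq α hα)
  · intro a ha b hb hab
    obtain ⟨ha0, ha1⟩ := hA a ha
    obtain ⟨hb0, hb1⟩ := hA b hb
    simp only [Finset.disjoint_insert_left, Finset.disjoint_singleton_left,
      Finset.mem_insert, Finset.mem_singleton]
    constructor <;> push_neg <;> constructor <;> intro h <;>
      first
        | exact hab (by linarith)
        | nlinarith [h]
end

section
/- Let μ be a probability measure on ℝ with finite first moment (∫|x| dμ(x) < ∞), whose cumulative distribution function F(y) = μ((−∞, y]) is strictly increasing on ℝ and differentiable with derivative f. Then for every Y ∈ ℝ, the continuous ranked probability score equals twice the integrated pinball loss: ∫_{−∞}^{∞} (F(y) − 1{Y ≤ y})² dy = 2·∫_0^1 ψ_τ(Y − F^{−1}(τ)) dτ, where F^{−1}(τ) = inf{y ∈ ℝ : F(y) ≥ τ} for τ ∈ (0,1). -/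
open MeasureTheory Set Filter Topology

/-- The continuous ranked probability score equals twice the integrated pinball loss:
for a probability measure with finite first moment whose CDF `F` is strictly increasing
and differentiable, `∫ (F(y) - 1{Y ≤ y})² dy = 2 ∫_0^1 ψ_τ(Y - F⁻¹(τ)) dτ`. -/
theorem crps_eq_two_integral_pinball (μ : Measure ℝ) [IsProbabilityMeasure μ]
    (hint : Integrable (fun x => |x|) μ)
    (F : ℝ → ℝ) (hF : ∀ y, F y = (μ (Set.Iic y)).toReal)
    (hFmono : StrictMono F)
    (f : ℝ → ℝ) (hf : ∀ y, HasDerivAt F (f y) y)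
    (Q : ℝ → ℝ) (hQ : ∀ τ ∈ Set.Ioo (0 : ℝ) 1, Q τ = sInf {y : ℝ | τ ≤ F y})
    (Y : ℝ) :
    ∫ y, (F y - (if Y ≤ y then (1 : ℝ) else 0)) ^ 2 =
      2 * ∫ τ in (0 : ℝ)..1, pinball τ (Y - Q τ) := by
  classical
  -- Basic facts about F
  have hcont : Continuous F := by
    rw [continuous_iff_continuousAt]; exact fun y => (hf y).continuousAt
  have hmono : Monotone F := hFmono.monotone
  have hF0 : ∀ y, 0 ≤ F y := fun y => by rw [hF]; exact ENNReal.toReal_nonneg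
  have hF1 : ∀ y, F y ≤ 1 := fun y => by
    rw [hF]
    have : μ (Iic y) ≤ 1 := prob_le_one
    simpa using ENNReal.toReal_mono (by simp) this
  have hF0' : ∀ y, 0 < F y := fun y => lt_of_le_of_lt (hF0 (y - 1)) (hFmono (by linarith))
  have hF1' : ∀ y, F y < 1 := fun y => lt_of_lt_of_le (hFmono (show y < y + 1 by linarith)) (hF1 (y + 1))
  -- limits of F
  have hFtop : Tendsto F atTop (𝓝 1) := by
    have h := tendsto_measure_Iic_atTop (μ := μ)
    have h2 : Tendsto (fun y => (μ (Iic y)).toReal) atTop (𝓝 (μ univ).toReal) :=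
      (ENNReal.tendsto_toReal (measure_ne_top μ _)).comp h
    simp only [measure_univ, ENNReal.toReal_one] at h2
    exact h2.congr fun y => (hF y).symm
  have hFbot : Tendsto F atBot (𝓝 0) := by
    have h : Tendsto (fun y => μ (Iic y)) atBot (𝓝 0) := by
      have h := tendsto_measure_iInter_atBot (μ := μ) (s := fun y : ℝ => Iic y)
        (fun y => measurableSet_Iic.nullMeasurableSet) (fun a b hab => Iic_subset_Iic.2 hab)
        ⟨0, measure_ne_top μ _⟩
      have he : ⋂ y : ℝ, Iic y = (∅ : Set ℝ) := by
        apply iInter_Iic_eq_empty_iff.mpr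
        rw [Set.range_id']
        exact not_bddBelow_univ
      rw [he] at h
      simpa [Function.comp_def] using h
    have h2 : Tendsto (fun y => (μ (Iic y)).toReal) atBot (𝓝 (0 : ENNReal).toReal) :=
      (ENNReal.tendsto_toReal (by simp)).comp h
    simpa using h2.congr fun y => (hF y).symm
  -- the key set identity
  have hset : ∀ τ ∈ Set.Ioo (0:ℝ) 1, {y : ℝ | τ ≤ F y} = Ici (Q τ) := by
    intro τ hτ
    obtain ⟨hτ0, hτ1⟩ := hτ
    have hne : {y : ℝ | τ ≤ F y}.Nonempty := by
      obtain ⟨y, hy⟩ := (hFtop.eventually (eventually_gt_nhds hτ1)).exists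
      exact ⟨y, hy.le⟩
    have hbdd : BddBelow {y : ℝ | τ ≤ F y} := by
      obtain ⟨y₀, hy₀⟩ := eventually_atBot.mp (hFbot.eventually (eventually_lt_nhds hτ0))
      refine ⟨y₀, fun y hy => ?_⟩
      by_contra hc
      exact absurd hy (not_le.mpr (hy₀ y (le_of_not_ge hc)))
    have hclosed : IsClosed {y : ℝ | τ ≤ F y} := isClosed_le continuous_const hcont
    have hmem : sInf {y : ℝ | τ ≤ F y} ∈ {y : ℝ | τ ≤ F y} := hclosed.csInf_mem hne hbdd
    rw [hQ τ ⟨hτ0, hτ1⟩]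
    ext y
    simp only [mem_setOf_eq, mem_Ici]
    constructor
    · intro hy; exact csInf_le hbdd hy
    · intro hy; exact le_trans hmem (hmono hy)
  have hQle : ∀ τ ∈ Set.Ioo (0:ℝ) 1, ∀ y, (Q τ ≤ y ↔ τ ≤ F y) := by
    intro τ hτ y
    constructor
    · intro h
      have : y ∈ Ici (Q τ) := h
      rw [← hset τ hτ] at this; exact this
    · intro h
      have : y ∈ {y : ℝ | τ ≤ F y} := h
      rw [hset τ hτ] at this; exact this
    -- indicator function
  set ind : ℝ → ℝ := fun y => if Y ≤ y then (1:ℝ) else 0 with hind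
  -- the kernel H
  set H : ℝ → ℝ → ENNReal := fun τ y =>
    if τ ≤ F y then (if y < Y then ENNReal.ofReal τ else 0)
    else (if Y ≤ y then ENNReal.ofReal (1 - τ) else 0) with hH
  have hHmeas : Measurable (Function.uncurry H) := by
    apply Measurable.ite
    · exact measurableSet_le measurable_fst (hcont.measurable.comp measurable_snd)
    · apply Measurable.ite
      · exact measurableSet_lt measurable_snd measurable_const
      · exact ENNReal.measurable_ofReal.comp measurable_fst
      · exact measurable_const
    · apply Measurable.ite
      · exact measurableSet_le measurable_const measurable_snd
      · exact ENNReal.measurable_ofReal.comp (measurable_const.sub measurable_fst)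
      · exact measurable_const
  -- Step A : inner τ-integral
  have stepA : ∀ y, ∫⁻ τ in Set.Ioo (0:ℝ) 1, H τ y =
      ENNReal.ofReal ((F y - ind y) ^ 2 / 2) := by
    intro y
    by_cases hy : Y ≤ y
    · -- right branch
      have h1 : ∀ τ, H τ y = (Ioi (F y)).indicator (fun τ => ENNReal.ofReal (1 - τ)) τ := by
        intro τ
        simp only [hH, Set.indicator, mem_Ioi]
        split_ifs with h2 h3 h4 <;> first
          | rfl
          | (exfalso; first | exact absurd hy (by linarith) | linarith | exact h3 (not_le.1 h2) | exact absurd hy h4)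
      calc ∫⁻ τ in Set.Ioo (0:ℝ) 1, H τ y
          = ∫⁻ τ in Set.Ioo (0:ℝ) 1, (Ioi (F y)).indicator (fun τ => ENNReal.ofReal (1 - τ)) τ := by
            exact lintegral_congr fun τ => h1 τ
        _ = ∫⁻ τ in Set.Ioo (F y) 1, ENNReal.ofReal (1 - τ) := by
            have hseteq : Ioi (F y) ∩ Ioo (0:ℝ) 1 = Ioo (F y) 1 := by
              ext τ
              simp only [mem_inter_iff, mem_Ioi, mem_Ioo]
              constructor
              · rintro ⟨h1, h2, h3⟩; exact ⟨h1, h3⟩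
              · rintro ⟨h1, h2⟩; exact ⟨h1, lt_trans (hF0' y) h1, h2⟩
            rw [lintegral_indicator measurableSet_Ioi, Measure.restrict_restrict measurableSet_Ioi,
              hseteq]
        _ = ENNReal.ofReal (∫ τ in Set.Ioo (F y) 1, (1 - τ)) := by
            rw [← ofReal_integral_eq_lintegral_ofReal]
            · exact ((continuous_const.sub continuous_id).integrableOn_Ioc).mono_set Ioo_subset_Ioc_self
            · filter_upwards [ae_restrict_mem measurableSet_Ioo] with τ hτ
              simp only [mem_Ioo] at hτ
              simp only [Pi.zero_apply]
              linarith [hτ.2]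
        _ = ENNReal.ofReal ((F y - ind y) ^ 2 / 2) := by
            congr 1
            rw [← MeasureTheory.integral_Ioc_eq_integral_Ioo,
              ← intervalIntegral.integral_of_le (hF1' y).le]
            rw [intervalIntegral.integral_sub intervalIntegrable_const intervalIntegral.intervalIntegrable_id]
            simp [integral_id, hind, hy]
            ring
    · -- left branch
      have h1 : ∀ τ, H τ y = (Iic (F y)).indicator (fun τ => ENNReal.ofReal τ) τ := by
        intro τ
        simp only [hH, Set.indicator, mem_Iic]
        split_ifs with h2 h3 <;> first
          | rfl
          | (exfalso; first | exact hy (by linarith) | linarith)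
      calc ∫⁻ τ in Set.Ioo (0:ℝ) 1, H τ y
          = ∫⁻ τ in Set.Ioo (0:ℝ) 1, (Iic (F y)).indicator (fun τ => ENNReal.ofReal τ) τ := by
            exact lintegral_congr fun τ => h1 τ
        _ = ∫⁻ τ in Set.Ioc (0:ℝ) (F y), ENNReal.ofReal τ := by
            have hseteq : Iic (F y) ∩ Ioo (0:ℝ) 1 = Ioc (0:ℝ) (F y) := by
              ext τ
              simp only [mem_inter_iff, mem_Iic, mem_Ioo, mem_Ioc]
              constructor
              · rintro ⟨h1, h2, h3⟩; exact ⟨h2, h1⟩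
              · rintro ⟨h1, h2⟩; exact ⟨h2, h1, lt_of_le_of_lt h2 (hF1' y)⟩
            rw [lintegral_indicator measurableSet_Iic, Measure.restrict_restrict measurableSet_Iic,
              hseteq]
        _ = ENNReal.ofReal (∫ τ in Set.Ioc (0:ℝ) (F y), τ) := by
            rw [← ofReal_integral_eq_lintegral_ofReal]
            · exact continuous_id.integrableOn_Ioc
            · filter_upwards [ae_restrict_mem measurableSet_Ioc] with τ hτ
              simp only [mem_Ioc] at hτ
              simp only [Pi.zero_apply]
              linarith [hτ.1]
        _ = ENNReal.ofReal ((F y - ind y) ^ 2 / 2) := by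
            congr 1
            rw [← intervalIntegral.integral_of_le (hF0' y).le]
            simp [integral_id, hind, hy]
  -- Step B : inner y-integral
  have stepB : ∀ τ ∈ Set.Ioo (0:ℝ) 1, ∫⁻ y, H τ y =
      ENNReal.ofReal (pinball τ (Y - Q τ)) := by
    intro τ hτ
    obtain ⟨hτ0, hτ1⟩ := hτ
    have hdec : ∀ y, H τ y = (Ico (Q τ) Y).indicator (fun _ => ENNReal.ofReal τ) y
        + (Ico Y (Q τ)).indicator (fun _ => ENNReal.ofReal (1 - τ)) y := by
      intro y
      have hiff := hQle τ ⟨hτ0, hτ1⟩ y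
      by_cases h1 : τ ≤ F y
      · have hq : Q τ ≤ y := hiff.mpr h1
        by_cases h2 : y < Y
        · have hm : y ∈ Ico (Q τ) Y := ⟨hq, h2⟩
          have hn : y ∉ Ico Y (Q τ) := fun hc => absurd hq (not_le.mpr hc.2)
          simp [hH, h1, h2, Set.indicator_of_mem hm, Set.indicator_of_notMem hn]
        · have hn1 : y ∉ Ico (Q τ) Y := fun hc => h2 hc.2
          have hn2 : y ∉ Ico Y (Q τ) := fun hc => absurd hq (not_le.mpr hc.2)
          simp [hH, h1, h2, Set.indicator_of_notMem hn1, Set.indicator_of_notMem hn2]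
      · have hq : ¬ Q τ ≤ y := fun hc => h1 (hiff.mp hc)
        have hn1 : y ∉ Ico (Q τ) Y := fun hc => hq hc.1
        by_cases h2 : Y ≤ y
        · have hm : y ∈ Ico Y (Q τ) := ⟨h2, not_le.mp hq⟩
          simp [hH, h1, h2, Set.indicator_of_mem hm, Set.indicator_of_notMem hn1]
        · have hn2 : y ∉ Ico Y (Q τ) := fun hc => h2 hc.1
          simp [hH, h1, h2, Set.indicator_of_notMem hn1, Set.indicator_of_notMem hn2]
    rw [lintegral_congr hdec]
    rw [lintegral_add_left ((measurable_const.indicator measurableSet_Ico))]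
    rw [lintegral_indicator measurableSet_Ico, lintegral_indicator measurableSet_Ico]
    simp only [MeasureTheory.setLIntegral_const, Real.volume_Ico]
    by_cases h : Q τ ≤ Y
    · have h2 : ENNReal.ofReal (Q τ - Y) = 0 := by
        rw [ENNReal.ofReal_eq_zero]; linarith
      rw [h2, mul_zero, add_zero, ← ENNReal.ofReal_mul hτ0.le]
      congr 1
      simp only [pinball, if_pos (by linarith : (0:ℝ) ≤ Y - Q τ)]
    · push_neg at h
      have h2 : ENNReal.ofReal (Y - Q τ) = 0 := by
        rw [ENNReal.ofReal_eq_zero]; linarith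
      rw [h2, mul_zero, zero_add, ← ENNReal.ofReal_mul (by linarith : (0:ℝ) ≤ 1 - τ)]
      congr 1
      simp only [pinball, if_neg (by linarith : ¬ (0:ℝ) ≤ Y - Q τ)]
      ring
  -- Tonelli
  have swap : ∫⁻ y, ∫⁻ τ in Set.Ioo (0:ℝ) 1, H τ y =
      ∫⁻ τ in Set.Ioo (0:ℝ) 1, ∫⁻ y, H τ y := by
    exact (lintegral_lintegral_swap hHmeas.aemeasurable).symm
    -- nonnegativity of the pinball loss
  have hpin_nonneg : ∀ τ ∈ Set.Ioo (0:ℝ) 1, 0 ≤ pinball τ (Y - Q τ) := by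
    intro τ hτ
    obtain ⟨hτ0, hτ1⟩ := hτ
    unfold pinball
    split_ifs with h
    · exact mul_nonneg hτ0.le h
    · exact mul_nonneg (by linarith) (by linarith [not_le.mp h])
  -- measurability bits
  have hindmeas : Measurable ind := by
    unfold ind
    exact Measurable.ite (measurableSet_le measurable_const measurable_id)
      measurable_const measurable_const
  have hsq_meas : Measurable fun y => (F y - ind y) ^ 2 :=
    (hcont.measurable.sub hindmeas).pow_const 2
  -- LHS as a lintegral
  have hLHS : ∫ y, (F y - ind y) ^ 2 =
      (∫⁻ y, ENNReal.ofReal ((F y - ind y) ^ 2)).toReal := by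
    rw [integral_eq_lintegral_of_nonneg_ae (Eventually.of_forall fun y => sq_nonneg _)
      hsq_meas.aestronglyMeasurable]
  have hlin : ∫⁻ y, ENNReal.ofReal ((F y - ind y) ^ 2) =
      2 * ∫⁻ τ in Set.Ioo (0:ℝ) 1, ENNReal.ofReal (pinball τ (Y - Q τ)) := by
    calc ∫⁻ y, ENNReal.ofReal ((F y - ind y) ^ 2)
        = ∫⁻ y, 2 * ENNReal.ofReal ((F y - ind y) ^ 2 / 2) := by
          apply lintegral_congr
          intro y
          rw [show ((2:ENNReal)) = ENNReal.ofReal (2:ℝ) by norm_num,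
            ← ENNReal.ofReal_mul (by norm_num)]
          congr 1
          ring
      _ = 2 * ∫⁻ y, ENNReal.ofReal ((F y - ind y) ^ 2 / 2) :=
          lintegral_const_mul 2 (ENNReal.measurable_ofReal.comp (hsq_meas.div_const 2))
      _ = 2 * ∫⁻ y, ∫⁻ τ in Set.Ioo (0:ℝ) 1, H τ y := by
          congr 1
          exact lintegral_congr fun y => (stepA y).symm
      _ = 2 * ∫⁻ τ in Set.Ioo (0:ℝ) 1, ∫⁻ y, H τ y := by rw [swap]
      _ = 2 * ∫⁻ τ in Set.Ioo (0:ℝ) 1, ENNReal.ofReal (pinball τ (Y - Q τ)) := by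
          congr 1
          apply setLIntegral_congr_fun measurableSet_Ioo
          exact fun τ hτ => stepB τ hτ
  -- RHS as a lintegral
  have hRHS : ∫ τ in (0:ℝ)..1, pinball τ (Y - Q τ)
      = (∫⁻ τ in Set.Ioo (0:ℝ) 1, ENNReal.ofReal (pinball τ (Y - Q τ))).toReal := by
    rw [intervalIntegral.integral_of_le zero_le_one,
      MeasureTheory.integral_Ioc_eq_integral_Ioo]
    rw [integral_eq_lintegral_of_nonneg_ae]
    · filter_upwards [ae_restrict_mem measurableSet_Ioo] with τ hτ
      simpa using hpin_nonneg τ hτ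
    · have hg : Measurable fun τ => (∫⁻ y, H τ y).toReal :=
        ENNReal.measurable_toReal.comp (Measurable.lintegral_prod_right hHmeas)
      apply hg.aestronglyMeasurable.congr
      filter_upwards [ae_restrict_mem measurableSet_Ioo] with τ hτ
      rw [stepB τ hτ, ENNReal.toReal_ofReal (hpin_nonneg τ hτ)]
  rw [hLHS, hlin, hRHS, ENNReal.toReal_mul]
  norm_num
end

section
/- A quantile average is always sharper than a probability average: let μ_1, …, μ_p be probability measures on ℝ, let k ≥ 2 be an even integer with ∫|x|^k dμ_j(x) < ∞ for each j, and let w_1, …, w_p ≥ 0 with ∑_{j=1}^p w_j = 1. Then the k-th moment of the quantile average is at most the k-th moment of the probability average: ∫_0^1 (∑_{j=1}^p w_j·Q_{μ_j}(u))^k du ≤ ∫_ℝ x^k d(∑_{j=1}^p w_j·μ_j)(x). -/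
open MeasureTheory

/-- The quantile function of a probability measure on ℝ:
`Q_μ(τ) = inf {x : F_μ(x) ≥ τ}` where `F_μ(x) = μ((-∞, x])`. -/
noncomputable def quantileFn (μ : Measure ℝ) (τ : ℝ) : ℝ :=
  sInf {x : ℝ | τ ≤ (μ (Set.Iic x)).toReal}

open ProbabilityTheory Set Filter Topology

lemma quantileFn_eq_cdf (μ : Measure ℝ) [IsProbabilityMeasure μ] (τ : ℝ) :
    quantileFn μ τ = sInf {x : ℝ | τ ≤ cdf μ x} := by
  unfold quantileFn
  congr 1
  ext x
  simp [cdf_eq_real, measureReal_def]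

lemma quantileSet_nonempty (μ : Measure ℝ) [IsProbabilityMeasure μ] {τ : ℝ} (hτ1 : τ < 1) :
    {x : ℝ | τ ≤ cdf μ x}.Nonempty := by
  obtain ⟨z, hz⟩ := ((tendsto_cdf_atTop μ).eventually (eventually_gt_nhds hτ1)).exists
  exact ⟨z, hz.le⟩

lemma quantileSet_bddBelow (μ : Measure ℝ) [IsProbabilityMeasure μ] {τ : ℝ} (hτ0 : 0 < τ) :
    BddBelow {x : ℝ | τ ≤ cdf μ x} := by
  obtain ⟨y, hy⟩ := ((tendsto_cdf_atBot μ).eventually (eventually_lt_nhds hτ0)).exists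
  refine ⟨y, fun z hz => ?_⟩
  by_contra h
  push_neg at h
  exact absurd (hz.trans (monotone_cdf μ h.le)) (not_le.2 hy)

lemma quantileFn_le_iff (μ : Measure ℝ) [IsProbabilityMeasure μ] {τ : ℝ}
    (hτ0 : 0 < τ) (hτ1 : τ < 1) (x : ℝ) :
    quantileFn μ τ ≤ x ↔ τ ≤ cdf μ x := by
  rw [quantileFn_eq_cdf]
  constructor
  · intro h
    have hne := quantileSet_nonempty μ hτ1
    have key : ∀ y, x < y → τ ≤ cdf μ y := by
      intro y hy
      obtain ⟨z, hz, hzy⟩ := exists_lt_of_csInf_lt hne (lt_of_le_of_lt h hy)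
      exact hz.trans (monotone_cdf μ hzy.le)
    have hrc : Filter.Tendsto (cdf μ) (𝓝[>] x) (𝓝 (cdf μ x)) :=
      ((cdf μ).right_continuous x).tendsto.mono_left
        (nhdsWithin_mono x Ioi_subset_Ici_self)
    exact ge_of_tendsto hrc (eventually_nhdsWithin_of_forall fun y hy => key y hy)
  · intro h
    exact csInf_le (quantileSet_bddBelow μ hτ0) h

lemma quantileFn_monotoneOn (μ : Measure ℝ) [IsProbabilityMeasure μ] :
    MonotoneOn (quantileFn μ) (Set.Ioo 0 1) := by
  intro τ₁ h₁ τ₂ h₂ h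
  rw [quantileFn_eq_cdf, quantileFn_eq_cdf]
  exact csInf_le_csInf (quantileSet_bddBelow μ h₁.1) (quantileSet_nonempty μ h₂.2)
    (fun x hx => le_trans h hx)

lemma aemeasurable_quantileFn (μ : Measure ℝ) [IsProbabilityMeasure μ] :
    AEMeasurable (quantileFn μ) (volume.restrict (Set.Ioo (0:ℝ) 1)) :=
  aemeasurable_restrict_of_monotoneOn measurableSet_Ioo (quantileFn_monotoneOn μ)

lemma map_quantileFn (μ : Measure ℝ) [IsProbabilityMeasure μ] :
    Measure.map (quantileFn μ) (volume.restrict (Set.Ioo (0:ℝ) 1)) = μ := by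
  haveI : IsProbabilityMeasure (volume.restrict (Set.Ioo (0:ℝ) 1)) :=
    ⟨by simp [Real.volume_Ioo]⟩
  haveI : IsProbabilityMeasure (Measure.map (quantileFn μ) (volume.restrict (Set.Ioo (0:ℝ) 1))) :=
    Measure.isProbabilityMeasure_map (aemeasurable_quantileFn μ)
  refine Measure.ext_of_Iic _ _ (fun x => ?_)
  rw [Measure.map_apply_of_aemeasurable (aemeasurable_quantileFn μ) measurableSet_Iic,
    Measure.restrict_apply' measurableSet_Ioo]
  have hset : quantileFn μ ⁻¹' Set.Iic x ∩ Set.Ioo 0 1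
      = Set.Iic (cdf μ x) ∩ Set.Ioo 0 1 := by
    ext τ
    simp only [Set.mem_inter_iff, Set.mem_preimage, Set.mem_Iic, Set.mem_Ioo]
    constructor
    · rintro ⟨h1, h2, h3⟩
      exact ⟨(quantileFn_le_iff μ h2 h3 x).1 h1, h2, h3⟩
    · rintro ⟨h1, h2, h3⟩
      exact ⟨(quantileFn_le_iff μ h2 h3 x).2 h1, h2, h3⟩
  rw [hset, ← ofReal_cdf μ x]
  rcases lt_or_eq_of_le (cdf_le_one μ x) with hc | hc
  · have : Set.Iic (cdf μ x) ∩ Set.Ioo (0:ℝ) 1 = Set.Ioc 0 (cdf μ x) := by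
      ext τ
      simp only [Set.mem_inter_iff, Set.mem_Iic, Set.mem_Ioo, Set.mem_Ioc]
      constructor
      · rintro ⟨h1, h2, h3⟩; exact ⟨h2, h1⟩
      · rintro ⟨h1, h2⟩; exact ⟨h2, h1, lt_of_le_of_lt h2 hc⟩
    rw [this, Real.volume_Ioc, sub_zero]
  · have : Set.Iic (cdf μ x) ∩ Set.Ioo (0:ℝ) 1 = Set.Ioo 0 1 := by
      rw [← hc]
      ext τ
      simp only [Set.mem_inter_iff, Set.mem_Iic, Set.mem_Ioo]
      exact ⟨fun h => h.2, fun h => ⟨h.2.le, h⟩⟩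
    rw [this, Real.volume_Ioo, ← hc]
    norm_num

/-- A quantile average is always sharper than a probability average: for even `k ≥ 2`,
the `k`-th moment of the quantile average is at most the `k`-th moment of the mixture. -/
theorem quantile_average_sharper (p : ℕ) (hp : 1 ≤ p)
    (μ : Fin p → Measure ℝ) [∀ j, IsProbabilityMeasure (μ j)]
    (k : ℕ) (hk : 2 ≤ k) (hkeven : Even k)
    (hint : ∀ j, Integrable (fun x => |x| ^ k) (μ j))
    (w : Fin p → ℝ) (hw : ∀ j, 0 ≤ w j) (hws : ∑ j, w j = 1) :
    ∫ u in (0 : ℝ)..1, (∑ j, w j * quantileFn (μ j) u) ^ k ≤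
      ∫ x, x ^ k ∂(∑ j, ENNReal.ofReal (w j) • μ j) := by
  set ν := volume.restrict (Set.Ioo (0:ℝ) 1) with hν
  have hintx : ∀ j, Integrable (fun x => x ^ k) (μ j) := by
    intro j
    have : (fun x : ℝ => x ^ k) = fun x => |x| ^ k := by
      funext x; rw [hkeven.pow_abs]
    rw [this]; exact hint j
  have hgmeas : ∀ j, AEMeasurable (quantileFn (μ j)) ν := fun j => aemeasurable_quantileFn (μ j)
  have hsm : ∀ j, AEStronglyMeasurable (fun x : ℝ => x ^ k)
      (Measure.map (quantileFn (μ j)) ν) := fun j =>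
    (continuous_pow k).aestronglyMeasurable
  have hchg : ∀ j, ∫ u, quantileFn (μ j) u ^ k ∂ν = ∫ x, x ^ k ∂(μ j) := by
    intro j
    have h := integral_map (hgmeas j) (hsm j)
    rw [map_quantileFn (μ j)] at h
    exact h.symm
  have hintg : ∀ j, Integrable (fun u => quantileFn (μ j) u ^ k) ν := by
    intro j
    have := (integrable_map_measure (hsm j) (hgmeas j)).1
      (by rw [map_quantileFn (μ j)]; exact hintx j)
    exact this
  have hjensen : ∀ u : ℝ, (∑ j, w j * quantileFn (μ j) u) ^ k
      ≤ ∑ j, w j * quantileFn (μ j) u ^ k := by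
    intro u
    have := (hkeven.convexOn_pow (𝕜 := ℝ)).map_sum_le (t := Finset.univ)
      (p := fun j => quantileFn (μ j) u) (fun j _ => hw j) hws
      (fun j _ => Set.mem_univ _)
    simpa [smul_eq_mul] using this
  have key : ∫ u, (∑ j, w j * quantileFn (μ j) u) ^ k ∂ν
      ≤ ∑ j, w j * ∫ x, x ^ k ∂(μ j) := by
    calc ∫ u, (∑ j, w j * quantileFn (μ j) u) ^ k ∂ν
        ≤ ∫ u, ∑ j, w j * quantileFn (μ j) u ^ k ∂ν := by
          refine integral_mono_of_nonneg (Filter.Eventually.of_forall fun u => hkeven.pow_nonneg _)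
            (integrable_finset_sum _ fun j _ => (hintg j).const_mul _)
            (Filter.Eventually.of_forall fun u => hjensen u)
      _ = ∑ j, ∫ u, w j * quantileFn (μ j) u ^ k ∂ν :=
          integral_finset_sum _ fun j _ => (hintg j).const_mul _
      _ = ∑ j, w j * ∫ x, x ^ k ∂(μ j) := by
          refine Finset.sum_congr rfl fun j _ => ?_
          simp_rw [← smul_eq_mul, integral_smul]
          rw [hchg j]
  have hrhs : ∫ x, x ^ k ∂(∑ j, ENNReal.ofReal (w j) • μ j)
      = ∑ j, w j * ∫ x, x ^ k ∂(μ j) := by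
    rw [integral_finset_sum_measure (fun j _ => (hintx j).smul_measure ENNReal.ofReal_ne_top)]
    refine Finset.sum_congr rfl fun j _ => ?_
    rw [integral_smul_measure, ENNReal.toReal_ofReal (hw j), smul_eq_mul]
  rw [hrhs, intervalIntegral.integral_of_le zero_le_one,
    MeasureTheory.integral_Ioc_eq_integral_Ioo]
  exact key
end

section
/- Let w_1, w_2 ∈ (0,1) with w_1 + w_2 = 1. Let f_1, f_2 : ℝ → (0,∞) be such that log f_1 is concave on ℝ and f_2(v)/f_1(v) → 0 as v → ∞. Let Q_1, Q_2 : (0,1) → ℝ satisfy Q_j(u) → ∞ as u → 1⁻ for j = 1, 2. Then f_1(w_1·Q_1(u) + w_2·Q_2(u)) · (w_1/f_1(Q_1(u)) + w_2/f_2(Q_2(u))) → ∞ as u → 1⁻. -/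
open Filter

private lemma key_ineq_s17 (w₁ w₂ a b c F : ℝ) (hw₁ : 0 < w₁) (hw₂ : 0 < w₂)
    (hsum : w₁ + w₂ = 1) (ha : 0 < a) (hb : 0 < b) (hc : 0 < c)
    (hF : a ^ w₁ * b ^ w₂ ≤ F) :
    (b / c) ^ w₂ ≤ F * (w₁ / a + w₂ / c) := by
  set G := a ^ w₁ * b ^ w₂ with hGdef
  have hG : 0 < G := by positivity
  have hp₁ : (0:ℝ) ≤ G / a := by positivity
  have hp₂ : (0:ℝ) ≤ G / c := by positivity
  have amgm := Real.geom_mean_le_arith_mean2_weighted hw₁.le hw₂.le hp₁ hp₂ hsum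
  have hid : (G / a) ^ w₁ * (G / c) ^ w₂ = (b / c) ^ w₂ := by
    rw [Real.div_rpow hG.le ha.le, Real.div_rpow hG.le hc.le,
      Real.div_rpow hb.le hc.le, div_mul_div_comm, ← Real.rpow_add hG, hsum,
      Real.rpow_one, hGdef]
    rw [div_eq_div_iff (by positivity) (by positivity)]
    ring
  calc (b / c) ^ w₂ = (G / a) ^ w₁ * (G / c) ^ w₂ := hid.symm
    _ ≤ w₁ * (G / a) + w₂ * (G / c) := amgm
    _ = G * (w₁ / a + w₂ / c) := by ring
    _ ≤ F * (w₁ / a + w₂ / c) := by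
        apply mul_le_mul_of_nonneg_right hF
        positivity

/-- The quantile average has thinner tails than its heavier-tailed component: with
`1/f̄(Q̄(u)) = w₁/f₁(Q₁(u)) + w₂/f₂(Q₂(u))` and `Q̄(u) = w₁ Q₁(u) + w₂ Q₂(u)`,
if `log f₁` is concave and `f₂ = o(f₁)` at `∞`, then `f₁(Q̄(u))/f̄(Q̄(u)) → ∞`
as `u → 1⁻`, i.e., `f̄ = o(f₁)` along the quantile average. -/
theorem quantile_average_thin_tails (w₁ w₂ : ℝ)
    (hw₁ : w₁ ∈ Set.Ioo (0 : ℝ) 1) (hw₂ : w₂ ∈ Set.Ioo (0 : ℝ) 1) (hsum : w₁ + w₂ = 1)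
    (f₁ f₂ : ℝ → ℝ) (hf₁ : ∀ v, 0 < f₁ v) (hf₂ : ∀ v, 0 < f₂ v)
    (hconc : ConcaveOn ℝ Set.univ fun v => Real.log (f₁ v))
    (hlim : Tendsto (fun v => f₂ v / f₁ v) atTop (nhds 0))
    (Q₁ Q₂ : ℝ → ℝ)
    (hQ₁ : Tendsto Q₁ (nhdsWithin 1 (Set.Iio 1)) atTop)
    (hQ₂ : Tendsto Q₂ (nhdsWithin 1 (Set.Iio 1)) atTop) :
    Tendsto (fun u => f₁ (w₁ * Q₁ u + w₂ * Q₂ u) *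
        (w₁ / f₁ (Q₁ u) + w₂ / f₂ (Q₂ u)))
      (nhdsWithin 1 (Set.Iio 1)) atTop := by
  -- f₁/f₂ → ∞ at ∞
  have h0 : Tendsto (fun v => f₂ v / f₁ v) atTop (nhdsWithin 0 (Set.Ioi 0)) := by
    refine tendsto_nhdsWithin_of_tendsto_nhds_of_eventually_within _ hlim ?_
    exact Eventually.of_forall fun v => div_pos (hf₂ v) (hf₁ v)
  have h1 : Tendsto (fun v => f₁ v / f₂ v) atTop atTop := by
    have := tendsto_inv_nhdsGT_zero.comp h0
    simpa only [Function.comp_def, inv_div] using this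
  have hr : Tendsto (fun u => f₁ (Q₂ u) / f₂ (Q₂ u)) (nhdsWithin 1 (Set.Iio 1)) atTop :=
    h1.comp hQ₂
  have hrw : Tendsto (fun u => (f₁ (Q₂ u) / f₂ (Q₂ u)) ^ w₂) (nhdsWithin 1 (Set.Iio 1))
      atTop := (tendsto_rpow_atTop hw₂.1).comp hr
  refine tendsto_atTop_mono (fun u => ?_) hrw
  -- concavity bound
  have hc := hconc.2 (Set.mem_univ (Q₁ u)) (Set.mem_univ (Q₂ u)) hw₁.1.le hw₂.1.le hsum
  simp only [smul_eq_mul] at hc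
  have hF : f₁ (Q₁ u) ^ w₁ * f₁ (Q₂ u) ^ w₂ ≤ f₁ (w₁ * Q₁ u + w₂ * Q₂ u) := by
    rw [Real.rpow_def_of_pos (hf₁ _), Real.rpow_def_of_pos (hf₁ _), ← Real.exp_add]
    calc Real.exp (Real.log (f₁ (Q₁ u)) * w₁ + Real.log (f₁ (Q₂ u)) * w₂)
        ≤ Real.exp (Real.log (f₁ (w₁ * Q₁ u + w₂ * Q₂ u))) := by
          apply Real.exp_le_exp.mpr
          linarith [hc]
      _ = f₁ (w₁ * Q₁ u + w₂ * Q₂ u) := Real.exp_log (hf₁ _)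
  exact key_ineq_s17 w₁ w₂ (f₁ (Q₁ u)) (f₁ (Q₂ u)) (f₂ (Q₂ u)) _ hw₁.1 hw₂.1 hsum
    (hf₁ _) (hf₁ _) (hf₂ _) hF
end

section
/- Let m ≥ 1, let 0 ≤ τ₁ < τ₂ < ⋯ < τ_m ≤ 1 be strictly increasing quantile levels, let v ∈ ℝ^m, and let u ∈ K_m be the isotonic projection of v, i.e., u minimizes the Euclidean norm ‖v − u‖₂ over all u ∈ K_m. If u ≠ v, then for every y ∈ ℝ the total pinball loss strictly improves: ∑_{i=1}^m ψ_{τ_i}(y − u_i) < ∑_{i=1}^m ψ_{τ_i}(y − v_i). -/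
lemma pinball_grad_bound (τ a b y : ℝ) (h0 : 0 ≤ τ) (h1 : τ ≤ 1) :
    ((if y < a then (1:ℝ) else 0) - τ) * (b - a) ≤ pinball τ (y - b) - pinball τ (y - a) := by
  unfold pinball
  split_ifs <;> nlinarith

lemma aux_nonpos (q A : ℝ) (hq : 0 < q) (h : ∀ t : ℝ, 0 ≤ t → 2*(t*A) ≤ q*t^2) : A ≤ 0 := by
  by_contra hA
  push_neg at hA
  have h' := h (A/q) (by positivity)
  have hA2 : 0 < A^2 := by positivity
  rw [div_pow] at h'
  have e1 : A/q*A = A^2/q := by field_simp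
  have e2 : q*(A^2/q^2) = A^2/q := by field_simp
  rw [e1, e2] at h'
  have : 0 < A^2/q := by positivity
  linarith

lemma aux_eq_zero (q A : ℝ) (hq : 0 < q) (h : ∀ t : ℝ, 2*(t*A) ≤ q*t^2) : A = 0 := by
  have h1 : A ≤ 0 := aux_nonpos q A hq fun t _ => h t
  have h2 : -A ≤ 0 := by
    refine aux_nonpos q (-A) hq fun t _ => ?_
    have := h (-t)
    nlinarith [this]
  linarith

/-- If the quantile levels are strictly increasing and the isotonic projection `u` of `v`
is not `v` itself, then isotonic projection strictly improves the total pinball loss. -/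
theorem pinball_isotonicProj_lt (m : ℕ) (hm : 1 ≤ m) (τ : Fin m → ℝ)
    (hτmono : StrictMono τ) (hτ0 : ∀ i, 0 ≤ τ i) (hτ1 : ∀ i, τ i ≤ 1)
    (v u : Fin m → ℝ) (hu : Monotone u)
    (hproj : ∀ w : Fin m → ℝ, Monotone w →
      Real.sqrt (∑ i, (v i - u i) ^ 2) ≤ Real.sqrt (∑ i, (v i - w i) ^ 2))
    (huv : u ≠ v) (y : ℝ) :
    ∑ i, pinball (τ i) (y - u i) < ∑ i, pinball (τ i) (y - v i) := by
  classical
  obtain ⟨M, rfl⟩ : ∃ M, m = M + 1 := ⟨m - 1, (Nat.succ_pred_eq_of_pos hm).symm⟩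
  -- squared form of projection inequality
  have hproj2 : ∀ w : Fin (M+1) → ℝ, Monotone w →
      2 * ∑ i, (v i - u i) * (w i - u i) ≤ ∑ i, (w i - u i)^2 := by
    intro w hw
    have h := hproj w hw
    have hA : (0:ℝ) ≤ ∑ i, (v i - u i)^2 := Finset.sum_nonneg fun i _ => sq_nonneg _
    have hB : (0:ℝ) ≤ ∑ i, (v i - w i)^2 := Finset.sum_nonneg fun i _ => sq_nonneg _
    have h2 : ∑ i, (v i - u i)^2 ≤ ∑ i, (v i - w i)^2 := by
      nlinarith [Real.sq_sqrt hA, Real.sq_sqrt hB, Real.sqrt_nonneg (∑ i, (v i - u i)^2),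
        Real.sqrt_nonneg (∑ i, (v i - w i)^2)]
    have hexp : ∑ i, (v i - w i)^2
        = ∑ i, (v i - u i)^2 - 2 * ∑ i, (v i - u i) * (w i - u i) + ∑ i, (w i - u i)^2 := by
      rw [Finset.mul_sum, ← Finset.sum_sub_distrib, ← Finset.sum_add_distrib]
      exact Finset.sum_congr rfl fun i _ => by ring
    linarith
  set dd : ℕ → ℝ := fun n => if h : n < M + 1 then v ⟨n, h⟩ - u ⟨n, h⟩ else 0 with hdd
  set S : ℕ → ℝ := fun k => ∑ n ∈ Finset.range k, dd n with hSdef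
  -- key variational inequality, ℕ-indexed
  have key : ∀ c : ℕ → ℝ, (Monotone fun i : Fin (M+1) => u i + c i) →
      2 * ∑ n ∈ Finset.range (M+1), dd n * c n ≤ ∑ n ∈ Finset.range (M+1), (c n)^2 := by
    intro c hc
    have h := hproj2 (fun i => u i + c i) hc
    simp only [add_sub_cancel_left] at h
    rw [← Fin.sum_univ_eq_sum_range (fun n => dd n * c n),
      ← Fin.sum_univ_eq_sum_range (fun n => (c n)^2)]
    have e : ∀ i : Fin (M+1), dd i = v i - u i := fun i => by
      simp only [hdd, dif_pos i.isLt, Fin.eta]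
    calc 2 * ∑ i : Fin (M+1), dd i * c i = 2 * ∑ i : Fin (M+1), (v i - u i) * c i := by
          rw [Finset.sum_congr rfl fun i _ => by rw [e i]]
      _ ≤ ∑ i : Fin (M+1), (c i)^2 := h
  -- Instantiate with step functions
  have hIco : ∀ (k : ℕ) (t : ℝ), k ≤ M + 1 →
      (Monotone fun i : Fin (M+1) => u i + (if k ≤ (i:ℕ) then t else 0)) →
      2 * (t * (S (M+1) - S k)) ≤ (M+1 : ℝ) * t^2 := by
    intro k t hk hmono
    have h := key (fun n => if k ≤ n then t else 0) hmono
    have hsplit := Finset.sum_range_add_sum_Ico dd hk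
    have e1 : ∑ n ∈ Finset.range (M+1), dd n * (if k ≤ n then t else 0)
        = t * (S (M+1) - S k) := by
      rw [← Finset.sum_range_add_sum_Ico _ hk]
      have h0 : ∑ n ∈ Finset.range k, dd n * (if k ≤ n then t else 0) = 0 :=
        Finset.sum_eq_zero fun n hn => by
          rw [if_neg (by exact Nat.not_le.mpr (Finset.mem_range.mp hn)), mul_zero]
      have h1 : ∑ n ∈ Finset.Ico k (M+1), dd n * (if k ≤ n then t else 0)
          = t * ∑ n ∈ Finset.Ico k (M+1), dd n := by
        rw [Finset.mul_sum]
        exact Finset.sum_congr rfl fun n hn => by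
          rw [if_pos (Finset.mem_Ico.mp hn).1]; ring
      rw [h0, zero_add, h1]
      congr 1
      simp only [hSdef]
      linarith
    have e2 : ∑ n ∈ Finset.range (M+1), (if k ≤ n then t else 0)^2 ≤ (M+1 : ℝ) * t^2 := by
      calc ∑ n ∈ Finset.range (M+1), (if k ≤ n then t else 0)^2
          ≤ ∑ _n ∈ Finset.range (M+1), t^2 := by
            refine Finset.sum_le_sum fun n _ => ?_
            by_cases hkn : k ≤ n <;> simp [hkn, sq_nonneg]
        _ = (M+1 : ℝ) * t^2 := by
            rw [Finset.sum_const, Finset.card_range, nsmul_eq_mul]; push_cast; ring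
    rw [e1] at h
    linarith
  have hq : (0:ℝ) < (M+1 : ℝ) := by positivity
  have hS0 : S 0 = 0 := by simp [hSdef]
  -- total sum is zero
  have hStot : S (M+1) = 0 := by
    refine aux_eq_zero (M+1 : ℝ) _ hq fun t => ?_
    have hmono : Monotone fun i : Fin (M+1) => u i + (if 0 ≤ (i:ℕ) then t else 0) := by
      intro i j hij
      simp only [Nat.zero_le, if_true]
      exact add_le_add_left (hu hij) t
    have := hIco 0 t (Nat.zero_le _) hmono
    rw [hS0, sub_zero] at this
    exact this
  -- prefix sums nonnegative
  have hSnn : ∀ k, k ≤ M + 1 → 0 ≤ S k := by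
    intro k hk
    have : -S k ≤ 0 := by
      refine aux_nonpos (M+1 : ℝ) _ hq fun t ht => ?_
      have hmono : Monotone fun i : Fin (M+1) => u i + (if k ≤ (i:ℕ) then t else 0) := by
        intro i j hij
        have hval : (i:ℕ) ≤ (j:ℕ) := hij
        have huij := hu hij
        dsimp only
        by_cases h1 : k ≤ (i:ℕ)
        · rw [if_pos h1, if_pos (h1.trans hval)]; linarith
        · rw [if_neg h1]
          by_cases h2 : k ≤ (j:ℕ)
          · rw [if_pos h2]; linarith
          · rw [if_neg h2]; linarith
      have := hIco k t hk hmono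
      rw [hStot] at this
      nlinarith [this]
    linarith
  -- prefix sums vanish at strict increase points
  have hSzero : ∀ k : ℕ, (hk : k < M) →
      u ⟨k, by omega⟩ < u ⟨k+1, by omega⟩ → S (k+1) = 0 := by
    intro k hk hgap
    refine le_antisymm ?_ (hSnn (k+1) (by omega))
    by_contra hpos
    push_neg at hpos
    set gap : ℝ := u ⟨k+1, by omega⟩ - u ⟨k, by omega⟩ with hgapdef
    have hgap0 : 0 < gap := by simp only [hgapdef]; linarith
    set s : ℝ := min gap (S (k+1) / (M+1)) with hs
    have hs0 : 0 < s := lt_min hgap0 (by positivity)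
    have hmono : Monotone fun i : Fin (M+1) => u i + (if k+1 ≤ (i:ℕ) then -s else 0) := by
      intro i j hij
      have hval : (i:ℕ) ≤ (j:ℕ) := hij
      have huij := hu hij
      dsimp only
      by_cases h1 : k+1 ≤ (i:ℕ)
      · rw [if_pos h1, if_pos (h1.trans hval)]; linarith
      · rw [if_neg h1]
        by_cases h2 : k+1 ≤ (j:ℕ)
        · rw [if_pos h2]
          have hik : i ≤ (⟨k, by omega⟩ : Fin (M+1)) := by
            rw [Fin.le_def]; simpa using by omega
          have hkj : (⟨k+1, by omega⟩ : Fin (M+1)) ≤ j := by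
            rw [Fin.le_def]; simpa using h2
          have e1 := hu hik
          have e2 := hu hkj
          have hsgap : s ≤ gap := min_le_left _ _
          simp only [hgapdef] at hsgap
          linarith
        · rw [if_neg h2]; linarith
    have h := hIco (k+1) (-s) (by omega) hmono
    rw [hStot] at h
    have hsq : s ≤ S (k+1) / (M+1) := min_le_right _ _
    have hqs : (M+1:ℝ) * s ≤ S (k+1) := by
      rw [le_div_iff₀ hq] at hsq; linarith
    nlinarith [mul_pos hs0 hpos, mul_le_mul_of_nonneg_right hqs hs0.le]
  -- the gradient sequence
  set gg : ℕ → ℝ := fun n => if h : n < M + 1 then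
      ((if y < u ⟨n, h⟩ then (1:ℝ) else 0) - τ ⟨n, h⟩) else 0 with hgg
  -- positivity of the inner product ⟨g, d⟩
  have main : 0 < ∑ n ∈ Finset.range (M+1), gg n * dd n := by
    have habel := Finset.sum_range_by_parts gg dd (M+1)
    simp only [smul_eq_mul, Nat.add_sub_cancel] at habel
    have hd0 : ∑ i ∈ Finset.range (M+1), dd i = 0 := hStot
    rw [habel, hd0, mul_zero, zero_sub]
    have hterm : ∀ i ∈ Finset.range M, (gg (i+1) - gg i) * S (i+1) ≤ 0 := by
      intro i hi
      have hiM : i < M := Finset.mem_range.mp hi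
      have hi1 : i < M + 1 := by omega
      have hi2 : i + 1 < M + 1 := by omega
      have hτlt : τ ⟨i, hi1⟩ < τ ⟨i+1, hi2⟩ := hτmono (by simp [Fin.lt_def])
      have hule : u ⟨i, hi1⟩ ≤ u ⟨i+1, hi2⟩ := hu (by simp [Fin.le_def])
      have hSn : 0 ≤ S (i+1) := hSnn (i+1) (by omega)
      simp only [hgg, dif_pos hi1, dif_pos hi2]
      by_cases ha : y < u ⟨i, hi1⟩
      · have hb : y < u ⟨i+1, hi2⟩ := lt_of_lt_of_le ha hule
        rw [if_pos ha, if_pos hb]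
        nlinarith
      · by_cases hb : y < u ⟨i+1, hi2⟩
        · have : S (i+1) = 0 := hSzero i hiM (by linarith [not_lt.mp ha])
          rw [this, mul_zero]
        · rw [if_neg ha, if_neg hb]
          nlinarith
    -- existence of a strictly negative term
    have hex : ∃ k, 1 ≤ k ∧ k ≤ M ∧ S k ≠ 0 := by
      by_contra hno
      push_neg at hno
      apply huv
      funext i
      have hSi : S i.val = 0 := by
        rcases Nat.eq_zero_or_pos i.val with h0 | h0
        · rw [h0]; exact hS0
        · have : i.val ≤ M := by omega
          exact hno i.val h0 this
      have hSi1 : S (i.val + 1) = 0 := by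
        rcases Nat.lt_or_ge i.val M with h0 | h0
        · exact hno (i.val+1) (by omega) (by omega)
        · have : i.val = M := by omega
          rw [this]; exact hStot
      have hdi : dd i.val = 0 := by
        have hstep := Finset.sum_range_succ dd i.val
        simp only [hSdef] at hSi hSi1
        rw [hSi1, hSi] at hstep
        linarith [hstep]
      have : v i - u i = 0 := by
        have := hdi
        simp only [hdd, dif_pos i.isLt, Fin.eta] at this
        exact this
      linarith
    obtain ⟨k, hk1, hkM, hkne⟩ := hex
    have hkpos : 0 < S k := lt_of_le_of_ne (hSnn k (by omega)) (Ne.symm hkne)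
    have hstrict : ∃ i ∈ Finset.range M, (gg (i+1) - gg i) * S (i+1) < 0 := by
      refine ⟨k-1, Finset.mem_range.mpr (by omega), ?_⟩
      have hkk : k - 1 + 1 = k := by omega
      have hi1 : k - 1 < M + 1 := by omega
      have hi2 : k - 1 + 1 < M + 1 := by omega
      have hτlt : τ ⟨k-1, hi1⟩ < τ ⟨k-1+1, hi2⟩ := hτmono (by simp [Fin.lt_def])
      have hule : u ⟨k-1, hi1⟩ ≤ u ⟨k-1+1, hi2⟩ := hu (by simp [Fin.le_def])
      simp only [hgg, dif_pos hi1, dif_pos hi2]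
      have hkpos' : 0 < S (k-1+1) := by rw [hkk]; exact hkpos
      by_cases ha : y < u ⟨k-1, hi1⟩
      · have hb : y < u ⟨k-1+1, hi2⟩ := lt_of_lt_of_le ha hule
        rw [if_pos ha, if_pos hb]
        nlinarith
      · by_cases hb : y < u ⟨k-1+1, hi2⟩
        · exfalso
          have : S (k-1+1) = 0 := hSzero (k-1) (by omega) (by linarith [not_lt.mp ha])
          rw [hkk] at this
          exact hkne this
        · rw [if_neg ha, if_neg hb]
          nlinarith
    have : ∑ i ∈ Finset.range M, (gg (i+1) - gg i) * S (i+1) < 0 := by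
      obtain ⟨i0, hi0, hlt⟩ := hstrict
      calc ∑ i ∈ Finset.range M, (gg (i+1) - gg i) * S (i+1)
          < ∑ i ∈ Finset.range M, (0:ℝ) := by
            apply Finset.sum_lt_sum (fun i hi => hterm i hi) ⟨i0, hi0, hlt⟩
        _ = 0 := Finset.sum_const_zero
    simp only [hSdef] at this
    linarith
  -- conclude via the convexity bound
  have hfin : ∑ n ∈ Finset.range (M+1), gg n * dd n
      ≤ ∑ i, pinball (τ i) (y - v i) - ∑ i, pinball (τ i) (y - u i) := by
    rw [← Finset.sum_sub_distrib, ← Fin.sum_univ_eq_sum_range (fun n => gg n * dd n)]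
    refine Finset.sum_le_sum fun i _ => ?_
    have hb := pinball_grad_bound (τ i) (u i) (v i) y (hτ0 i) (hτ1 i)
    simp only [hgg, hdd, dif_pos i.isLt, Fin.eta]
    exact hb
  linarith
end

section
/- Let m ≥ 1, let v ∈ ℝ^m, and let u ∈ K_m be the isotonic projection of v, i.e., u minimizes the Euclidean norm ‖v − u‖₂ over all u ∈ K_m, and suppose u ≠ v. Then for every strictly increasing vector g ∈ ℝ^m (g_1 < g_2 < ⋯ < g_m) and every p > 1, the ℓ_p error strictly improves: ∑_{i=1}^m |u_i − g_i|^p < ∑_{i=1}^m |v_i − g_i|^p. -/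
open Finset

private lemma tiny_aux {a C ε : ℝ} (hε : 0 < ε) (hC : 0 ≤ C)
    (h : ∀ t : ℝ, 0 < t → t ≤ ε → 2 * t * a ≤ t ^ 2 * C) : a ≤ 0 := by
  by_contra hpos
  push_neg at hpos
  rcases eq_or_lt_of_le hC with hC0 | hC0
  · have := h ε hε le_rfl
    rw [← hC0] at this
    nlinarith
  · set t := min ε (a / C) with ht
    have ht0 : 0 < t := lt_min hε (div_pos hpos hC0)
    have h1 := h t ht0 (min_le_left _ _)
    have h2 : t * C ≤ a := by
      have h3 : t ≤ a / C := min_le_right _ _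
      calc t * C ≤ (a / C) * C := by nlinarith
        _ = a := by field_simp
    nlinarith

private lemma bern_aux {p : ℝ} (hp : 1 < p) {a b : ℝ} (ha : 0 ≤ a) (hb : 0 ≤ b) :
    b ^ p + p * b ^ (p - 1) * (a - b) ≤ a ^ p := by
  rcases eq_or_lt_of_le hb with hb0 | hb0
  · rw [← hb0]
    rw [Real.zero_rpow (by positivity), Real.zero_rpow (by linarith)]
    simpa using Real.rpow_nonneg ha p
  · have hs : (-1 : ℝ) ≤ a / b - 1 := by
      have : 0 ≤ a / b := div_nonneg ha hb0.le
      linarith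
    have hB := one_add_mul_self_le_rpow_one_add hs hp.le
    have h1 : (1 + (a / b - 1)) = a / b := by ring
    rw [h1] at hB
    have h2 : (a / b) ^ p = a ^ p / b ^ p := Real.div_rpow ha hb0.le p
    rw [h2] at hB
    have hbp : 0 < b ^ p := Real.rpow_pos_of_pos hb0 p
    have hB2 : b ^ p * (1 + p * (a / b - 1)) ≤ a ^ p := by
      rw [mul_comm]
      exact (le_div_iff₀ hbp).mp hB
    have h3 : b ^ (p - 1) = b ^ p / b := by
      rw [Real.rpow_sub hb0, Real.rpow_one]
    rw [h3]
    have h4 : b ^ p * (1 + p * (a / b - 1)) = b ^ p + p * (b ^ p / b) * (a - b) := by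
      field_simp
    linarith [h4 ▸ hB2]

noncomputable def isoPhi (p y : ℝ) : ℝ :=
  if 0 ≤ y then p * y ^ (p - 1) else -(p * (-y) ^ (p - 1))

private lemma isoPhi_strictMono {p : ℝ} (hp : 1 < p) : StrictMono (isoPhi p) := by
  intro y1 y2 h12
  have hp0 : 0 < p := by linarith
  have hp1 : 0 < p - 1 := by linarith
  unfold isoPhi
  by_cases h1 : 0 ≤ y1
  · rw [if_pos h1, if_pos (by linarith : 0 ≤ y2)]
    have := Real.rpow_lt_rpow h1 h12 hp1
    nlinarith
  · rw [if_neg h1]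
    push_neg at h1
    by_cases h2 : 0 ≤ y2
    · rw [if_pos h2]
      have hpos : 0 < (-y1) ^ (p - 1) := Real.rpow_pos_of_pos (by linarith) _
      have hnn : 0 ≤ y2 ^ (p - 1) := Real.rpow_nonneg h2 _
      nlinarith
    · rw [if_neg h2]
      push_neg at h2
      have := Real.rpow_lt_rpow (by linarith : (0:ℝ) ≤ -y2) (by linarith : -y2 < -y1) hp1
      nlinarith

private lemma isoGrad_nonneg {p : ℝ} (hp : 1 < p) (x y : ℝ) (hy : 0 ≤ y) :
    |y| ^ p + isoPhi p y * (x - y) ≤ |x| ^ p := by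
  have hphi : isoPhi p y = p * y ^ (p - 1) := if_pos hy
  rw [hphi, abs_of_nonneg hy]
  by_cases hx : 0 ≤ x
  · rw [abs_of_nonneg hx]
    have := bern_aux hp hx hy
    linarith
  · push_neg at hx
    rw [abs_of_neg hx]
    have h0 := bern_aux hp le_rfl hy
    rw [Real.zero_rpow (by positivity)] at h0
    have h1 : 0 ≤ (-x) ^ p := Real.rpow_nonneg (by linarith) p
    have h2 : p * y ^ (p - 1) * x ≤ 0 := by
      have h3 : 0 ≤ y ^ (p - 1) := Real.rpow_nonneg hy _
      have h4 : 0 ≤ p * y ^ (p - 1) := by nlinarith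
      exact mul_nonpos_of_nonneg_of_nonpos h4 hx.le
    nlinarith

private lemma isoGrad {p : ℝ} (hp : 1 < p) (x y : ℝ) :
    |y| ^ p + isoPhi p y * (x - y) ≤ |x| ^ p := by
  by_cases hy : 0 ≤ y
  · exact isoGrad_nonneg hp x y hy
  · push_neg at hy
    have h := isoGrad_nonneg hp (-x) (-y) (by linarith)
    rw [abs_neg, abs_neg] at h
    have hphi1 : isoPhi p (-y) = p * (-y) ^ (p - 1) := if_pos (by linarith)
    have hphi2 : isoPhi p y = -(p * (-y) ^ (p - 1)) := if_neg (not_le.mpr hy)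
    rw [hphi1] at h
    rw [hphi2]
    nlinarith [h]
private lemma abel_neg (m : ℕ) (h d : ℕ → ℝ)
    (hS0 : ∀ k, k < m → (∑ i ∈ Finset.range (k + 1), d i) ≤ 0)
    (hSm : (∑ i ∈ Finset.range m, d i) = 0)
    (hstep : ∀ k, k + 1 < m → (∑ i ∈ Finset.range (k + 1), d i) < 0 → h (k + 1) < h k)
    (hex : ∃ k, k + 1 < m ∧ (∑ i ∈ Finset.range (k + 1), d i) < 0) :
    ∑ i ∈ Finset.range m, h i * d i < 0 := by
  have hbp := Finset.sum_range_by_parts h d m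
  simp only [smul_eq_mul] at hbp
  rw [hbp, hSm, mul_zero, zero_sub, neg_lt, neg_zero]
  have hterm : ∀ i ∈ Finset.range (m - 1),
      (0:ℝ) ≤ (h (i + 1) - h i) * ∑ j ∈ Finset.range (i + 1), d j := by
    intro i hi
    have him : i + 1 < m := by
      have := Finset.mem_range.mp hi
      omega
    have hSle := hS0 i (by omega)
    rcases eq_or_lt_of_le hSle with heq | hlt
    · rw [heq, mul_zero]
    · have := hstep i him hlt
      have h1 : h (i + 1) - h i < 0 := by linarith
      nlinarith
  obtain ⟨k, hk1, hk2⟩ := hex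
  have hkmem : k ∈ Finset.range (m - 1) := Finset.mem_range.mpr (by omega)
  have hkpos : (0:ℝ) < (h (k + 1) - h k) * ∑ j ∈ Finset.range (k + 1), d j := by
    have := hstep k hk1 hk2
    have h1 : h (k + 1) - h k < 0 := by linarith
    nlinarith
  calc (0:ℝ) = ∑ i ∈ Finset.range (m - 1), 0 := by simp
    _ < ∑ i ∈ Finset.range (m - 1), (h (i + 1) - h i) * ∑ j ∈ Finset.range (i + 1), d j := by
        apply Finset.sum_lt_sum hterm ⟨k, hkmem, hkpos⟩
private lemma key_var (m : ℕ) (v u : Fin m → ℝ)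
    (hproj : ∀ w : Fin m → ℝ, Monotone w →
      Real.sqrt (∑ i, (v i - u i) ^ 2) ≤ Real.sqrt (∑ i, (v i - w i) ^ 2))
    (c : Fin m → ℝ) (ε : ℝ) (hε : 0 < ε)
    (hmono : ∀ t : ℝ, 0 < t → t ≤ ε → Monotone fun i => u i + t * c i) :
    ∑ i, (v i - u i) * c i ≤ 0 := by
  have hCnn : (0:ℝ) ≤ ∑ i, (c i) ^ 2 := Finset.sum_nonneg fun i _ => sq_nonneg _
  apply tiny_aux hε hCnn
  intro t ht0 htε
  have hw := hproj _ (hmono t ht0 htε)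
  have h1 : (0:ℝ) ≤ ∑ i, (v i - u i) ^ 2 := Finset.sum_nonneg fun i _ => sq_nonneg _
  have h2 : (0:ℝ) ≤ ∑ i, (v i - (u i + t * c i)) ^ 2 :=
    Finset.sum_nonneg fun i _ => sq_nonneg _
  have hQ : ∑ i, (v i - u i) ^ 2 ≤ ∑ i, (v i - (u i + t * c i)) ^ 2 := by
    nlinarith [Real.sq_sqrt h1, Real.sq_sqrt h2,
      Real.sqrt_nonneg (∑ i, (v i - u i) ^ 2),
      Real.sqrt_nonneg (∑ i, (v i - (u i + t * c i)) ^ 2)]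
  have hexp : ∑ i, (v i - (u i + t * c i)) ^ 2
      = ∑ i, (v i - u i) ^ 2 - 2 * t * (∑ i, (v i - u i) * c i)
        + t ^ 2 * (∑ i, (c i) ^ 2) := by
    rw [Finset.mul_sum, Finset.mul_sum, ← Finset.sum_sub_distrib, ← Finset.sum_add_distrib]
    exact Finset.sum_congr rfl fun i _ => by ring
  linarith [hexp ▸ hQ]
private def extF {m : ℕ} (f : Fin m → ℝ) : ℕ → ℝ := fun n => if hn : n < m then f ⟨n, hn⟩ else 0

private lemma extF_lt {m : ℕ} (f : Fin m → ℝ) {n : ℕ} (hn : n < m) :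
    extF f n = f ⟨n, hn⟩ := dif_pos hn

private lemma extF_fin {m : ℕ} (f : Fin m → ℝ) (i : Fin m) : extF f i.val = f i := by
  rw [extF_lt f i.isLt]

private lemma sum_extF {m : ℕ} (f : Fin m → ℝ) :
    ∑ i : Fin m, f i = ∑ n ∈ Finset.range m, extF f n := by
  rw [← Fin.sum_univ_eq_sum_range (extF f) m]
  exact Finset.sum_congr rfl fun i _ => (extF_fin f i).symm

/-- If the isotonic projection `u` of `v` is not `v` itself, then for any strictly
increasing target `g` and any `p > 1`, isotonic projection strictly improves the
ℓ_p error. -/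
theorem lp_isotonicProj_lt (m : ℕ) (hm : 1 ≤ m) (v u : Fin m → ℝ)
    (hu : Monotone u)
    (hproj : ∀ w : Fin m → ℝ, Monotone w →
      Real.sqrt (∑ i, (v i - u i) ^ 2) ≤ Real.sqrt (∑ i, (v i - w i) ^ 2))
    (huv : u ≠ v) (g : Fin m → ℝ) (hg : StrictMono g) (p : ℝ) (hp : 1 < p) :
    ∑ i, |u i - g i| ^ p < ∑ i, |v i - g i| ^ p := by
  classical
  set d : Fin m → ℝ := fun i => u i - v i with hd
  set dt : ℕ → ℝ := extF d with hdt
  set hh : ℕ → ℝ := extF (fun i => isoPhi p (u i - g i)) with hhh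
  -- prefix sums over range (k+1) equal filtered Fin sums
  have hSfin : ∀ k : ℕ, k < m →
      (∑ i ∈ Finset.range (k + 1), dt i) = ∑ i : Fin m, (if (i : ℕ) ≤ k then d i else 0) := by
    intro k hk
    have e1 : ∑ i : Fin m, (if (i : ℕ) ≤ k then d i else 0)
        = ∑ n ∈ Finset.range m, (if n ≤ k then dt n else 0) := by
      rw [← Fin.sum_univ_eq_sum_range (fun n => if n ≤ k then dt n else 0) m]
      refine Finset.sum_congr rfl fun i _ => ?_
      by_cases hik : (i : ℕ) ≤ k
      · rw [if_pos hik, if_pos hik, hdt, extF_fin]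
      · rw [if_neg hik, if_neg hik]
    calc ∑ i ∈ Finset.range (k + 1), dt i
        = ∑ i ∈ Finset.range (k + 1), (if i ≤ k then dt i else 0) := by
          refine Finset.sum_congr rfl fun n hn => ?_
          have hn' : n ≤ k := by have := Finset.mem_range.mp hn; omega
          rw [if_pos hn']
      _ = ∑ i ∈ Finset.range m, (if i ≤ k then dt i else 0) := by
          refine Finset.sum_subset (Finset.range_subset_range.mpr (by omega)) fun x _ hx => ?_
          rw [if_neg (by simp only [Finset.mem_range] at hx; omega)]
      _ = ∑ i : Fin m, (if (i : ℕ) ≤ k then d i else 0) := e1.symm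
  -- prefix sums are ≤ 0
  have hPre : ∀ k : ℕ, k < m → (∑ i ∈ Finset.range (k + 1), dt i) ≤ 0 := by
    intro k hk
    have hkey := key_var m v u hproj (fun i => if (i : ℕ) ≤ k then (-1 : ℝ) else 0) 1 one_pos ?_
    · rw [hSfin k hk]
      have e : ∑ i : Fin m, (if (i : ℕ) ≤ k then d i else 0)
          = ∑ i, (v i - u i) * (if (i : ℕ) ≤ k then (-1 : ℝ) else 0) := by
        refine Finset.sum_congr rfl fun i _ => ?_
        by_cases hik : (i : ℕ) ≤ k
        · rw [if_pos hik, if_pos hik, hd]; ring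
        · rw [if_neg hik, if_neg hik, mul_zero]
      rw [e]; exact hkey
    · intro t ht0 _ i j hij
      simp only
      have hij' : (i : ℕ) ≤ (j : ℕ) := Fin.le_def.mp hij
      have huij := hu hij
      by_cases hik : (i : ℕ) ≤ k
      · by_cases hjk : (j : ℕ) ≤ k
        · rw [if_pos hik, if_pos hjk]; linarith
        · rw [if_pos hik, if_neg hjk]; linarith
      · have hjk : ¬(j : ℕ) ≤ k := fun h => hik (le_trans hij' h)
        rw [if_neg hik, if_neg hjk]; linarith
  -- prefix sums are ≥ 0 at strict jumps of u
  have hJump : ∀ k : ℕ, (hk : k + 1 < m) →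
      u ⟨k, by omega⟩ < u ⟨k + 1, hk⟩ → 0 ≤ ∑ i ∈ Finset.range (k + 1), dt i := by
    intro k hk hlt
    have hk' : k < m := by omega
    have hε : (0 : ℝ) < u ⟨k + 1, hk⟩ - u ⟨k, hk'⟩ := by
      have : u ⟨k, by omega⟩ = u ⟨k, hk'⟩ := rfl
      linarith [this ▸ hlt]
    have hkey := key_var m v u hproj (fun i => if (i : ℕ) ≤ k then (1 : ℝ) else 0)
      (u ⟨k + 1, hk⟩ - u ⟨k, hk'⟩) hε ?_
    · rw [hSfin k hk']
      have e : ∑ i, (v i - u i) * (if (i : ℕ) ≤ k then (1 : ℝ) else 0)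
          = -∑ i : Fin m, (if (i : ℕ) ≤ k then d i else 0) := by
        rw [← Finset.sum_neg_distrib]
        refine Finset.sum_congr rfl fun i _ => ?_
        by_cases hik : (i : ℕ) ≤ k
        · rw [if_pos hik, if_pos hik, hd]; ring
        · rw [if_neg hik, if_neg hik, mul_zero, neg_zero]
      rw [e] at hkey
      linarith
    · intro t ht0 htε i j hij
      simp only
      have hij' : (i : ℕ) ≤ (j : ℕ) := Fin.le_def.mp hij
      have huij := hu hij
      by_cases hik : (i : ℕ) ≤ k
      · by_cases hjk : (j : ℕ) ≤ k
        · rw [if_pos hik, if_pos hjk]; linarith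
        · rw [if_pos hik, if_neg hjk]
          push_neg at hjk
          have h1 : u i ≤ u ⟨k, hk'⟩ := hu (by rw [Fin.le_def]; exact hik)
          have h2 : u ⟨k + 1, hk⟩ ≤ u j := hu (by rw [Fin.le_def]; simpa using hjk)
          linarith
      · have hjk : ¬(j : ℕ) ≤ k := fun h => hik (le_trans hij' h)
        rw [if_neg hik, if_neg hjk]; linarith
  -- total sum is 0
  have hTot : (∑ i ∈ Finset.range m, dt i) = 0 := by
    have e : (∑ i ∈ Finset.range m, dt i) = ∑ i : Fin m, d i := (sum_extF d).symm
    have k1 := key_var m v u hproj (fun _ => (1 : ℝ)) 1 one_pos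
      (fun t ht0 _ i j hij => by simp only; linarith [hu hij])
    have k2 := key_var m v u hproj (fun _ => (-1 : ℝ)) 1 one_pos
      (fun t ht0 _ i j hij => by simp only; linarith [hu hij])
    have e2 : ∑ i : Fin m, d i = -∑ i, (v i - u i) := by
      rw [← Finset.sum_neg_distrib]
      exact Finset.sum_congr rfl fun i _ => by rw [hd]; ring
    simp only [mul_one] at k1
    have k2' : (0 : ℝ) ≤ ∑ i, (v i - u i) := by
      have e3 : ∑ i, (v i - u i) * (-1 : ℝ) = -∑ i, (v i - u i) := by
        rw [← Finset.sum_neg_distrib]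
        exact Finset.sum_congr rfl fun i _ => by ring
      rw [e3] at k2; linarith
    rw [e, e2]; linarith
  -- step: if a prefix sum is strictly negative, hh strictly decreases across the boundary
  have hstep : ∀ k, k + 1 < m → (∑ i ∈ Finset.range (k + 1), dt i) < 0 → hh (k + 1) < hh k := by
    intro k hk hS
    have hk' : k < m := by omega
    have hequ : u ⟨k + 1, hk⟩ = u ⟨k, hk'⟩ := by
      rcases eq_or_lt_of_le (hu (show (⟨k, hk'⟩ : Fin m) ≤ ⟨k + 1, hk⟩ from Fin.mk_le_mk.mpr (by omega))) with he | hl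
      · exact he.symm
      · exact absurd (hJump k hk hl) (by linarith)
    rw [hhh, extF_lt _ hk, extF_lt _ hk', hequ]
    apply isoPhi_strictMono hp
    have hgk : g ⟨k, hk'⟩ < g ⟨k + 1, hk⟩ := hg (Fin.mk_lt_mk.mpr (by omega))
    linarith
  -- existence of a strictly negative prefix sum
  have hex : ∃ k, k + 1 < m ∧ (∑ i ∈ Finset.range (k + 1), dt i) < 0 := by
    have hne : ∃ i : Fin m, d i ≠ 0 := by
      by_contra hc
      push_neg at hc
      apply huv
      funext i
      have := hc i
      rw [hd] at this
      simp only at this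
      linarith [this]
    obtain ⟨i1, hi1⟩ := hne
    have hsne : (Finset.univ.filter (fun i => d i ≠ 0)).Nonempty :=
      ⟨i1, by simp [hi1]⟩
    set i0 := (Finset.univ.filter (fun i => d i ≠ 0)).min' hsne with hi0
    have hi0mem : d i0 ≠ 0 := by
      have := Finset.min'_mem _ hsne
      simp only [Finset.mem_filter] at this
      exact this.2
    have hmin : ∀ j : Fin m, j < i0 → d j = 0 := by
      intro j hj
      by_contra hdj
      exact absurd hj (not_lt.mpr (Finset.min'_le _ j (by simp [hdj])))
    have hSval : (∑ i ∈ Finset.range (i0.val + 1), dt i) = d i0 := by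
      rw [Finset.sum_range_succ]
      have hz : (∑ i ∈ Finset.range i0.val, dt i) = 0 := by
        refine Finset.sum_eq_zero fun n hn => ?_
        have hn' : n < i0.val := Finset.mem_range.mp hn
        have hnm : n < m := lt_trans hn' i0.isLt
        rw [hdt, extF_lt _ hnm]
        exact hmin ⟨n, hnm⟩ (by rw [Fin.lt_def]; exact hn')
      rw [hz, zero_add, hdt, extF_fin]
    have hSle := hPre i0.val i0.isLt
    rw [hSval] at hSle
    have hdneg : d i0 < 0 := lt_of_le_of_ne hSle hi0mem
    refine ⟨i0.val, ?_, by rw [hSval]; exact hdneg⟩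
    by_contra hge
    push_neg at hge
    have hiv : i0.val + 1 = m := by omega
    rw [← hiv, hSval] at hTot
    linarith
  have habel := abel_neg m hh dt hPre hTot hstep hex
  have hconv : ∀ i : Fin m,
      |u i - g i| ^ p ≤ |v i - g i| ^ p + isoPhi p (u i - g i) * d i := by
    intro i
    have h1 := isoGrad hp (v i - g i) (u i - g i)
    have he : (v i - g i) - (u i - g i) = -(d i) := by rw [hd]; ring
    rw [he, mul_neg] at h1
    linarith
  have hsum : ∑ i : Fin m, (|v i - g i| ^ p + isoPhi p (u i - g i) * d i)
      = (∑ i, |v i - g i| ^ p) + ∑ i ∈ Finset.range m, hh i * dt i := by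
    rw [Finset.sum_add_distrib]
    congr 1
    rw [sum_extF (fun i => isoPhi p (u i - g i) * d i)]
    refine Finset.sum_congr rfl fun n hn => ?_
    have hnm : n < m := Finset.mem_range.mp hn
    rw [extF_lt _ hnm, hhh, hdt, extF_lt _ hnm, extF_lt _ hnm]
  calc ∑ i, |u i - g i| ^ p
      ≤ ∑ i : Fin m, (|v i - g i| ^ p + isoPhi p (u i - g i) * d i) :=
        Finset.sum_le_sum fun i _ => hconv i
    _ = (∑ i, |v i - g i| ^ p) + ∑ i ∈ Finset.range m, hh i * dt i := hsum
    _ < ∑ i, |v i - g i| ^ p := by linarith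
end
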